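/- arXiv:2502.06558 — 10 statements merged into one kernel-verified Lean document; each statement's English description precedes it below -/
import Mathlib

section
/- Let c be a greedy coloring of a graph G. For any vertex x and any neighbor p of x, if S is the set of neighbors of x whose color exceeds c(p), then c(x) ≤ c(p) + |S| + 1. -/
/-- Pivot bound: for a neighbor `p` of `x`, the greedy color of `x` is at most
`c p` plus the number of neighbors of `x` with color exceeding `c p`, plus 1. -/
theorem stmt1 {V : Type*} [Fintype V] [DecidableEq V] (G : SimpleGraph V)
    [DecidableRel G.Adj] (ord : V → ℕ) (hord : Function.Injective ord)
    (c : V → ℕ)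
    (hc : ∀ v, c v = sInf {n : ℕ | 1 ≤ n ∧ ∀ w, G.Adj v w → ord w < ord v → c w ≠ n})
    (x p : V) (hp : G.Adj x p) :
    c x ≤ c p + (Finset.univ.filter (fun w => G.Adj x w ∧ c p < c w)).card + 1 := by
  by_cases h : c x ≤ c p + 1
  · omega
  push_neg at h
  set S := Finset.univ.filter (fun w => G.Adj x w ∧ c p < c w) with hS
  have key : ∀ n, 1 ≤ n → n < c x → ∃ w, G.Adj x w ∧ c w = n := by
    intro n h1 h2
    rw [hc x] at h2
    have hn := Nat.notMem_of_lt_sInf h2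
    rw [Set.mem_setOf_eq] at hn
    push_neg at hn
    obtain ⟨w, hw, _, hcw⟩ := hn h1
    exact ⟨w, hw, hcw⟩
  have hsub : Finset.Icc (c p + 1) (c x - 1) ⊆ S.image c := by
    intro n hn
    simp only [Finset.mem_Icc] at hn
    obtain ⟨w, hw, hcw⟩ := key n (by omega) (by omega)
    refine Finset.mem_image.mpr ⟨w, ?_, hcw⟩
    simp only [hS, Finset.mem_filter, Finset.mem_univ, true_and]
    exact ⟨hw, by omega⟩
  have h1 := Finset.card_le_card hsub
  have h2 := Finset.card_image_le (s := S) (f := c)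
  rw [Nat.card_Icc] at h1
  omega
end

section
/- If three pairwise-disjoint unit intervals (each open or closed) all intersect the closed unit interval [a, a+1], then, listed left to right, they are exactly the closed interval [a-1, a], the open interval (a, a+1), and the closed interval [a+1, a+2]. -/
/-- A set of reals is an open or closed unit interval. -/
def IsUnitInterval (s : Set ℝ) : Prop :=
  ∃ r : ℝ, s = Set.Icc r (r + 1) ∨ s = Set.Ioo r (r + 1)

lemma mem_of_form {s : Set ℝ} {r x : ℝ}
    (hs : s = Set.Icc r (r + 1) ∨ s = Set.Ioo r (r + 1))
    (hx : x ∈ Set.Ioo r (r + 1)) : x ∈ s := by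
  rcases hs with h | h <;> rw [h]
  · exact Set.Ioo_subset_Icc_self hx
  · exact hx

lemma sub_of_form {s : Set ℝ} {r : ℝ}
    (hs : s = Set.Icc r (r + 1) ∨ s = Set.Ioo r (r + 1)) :
    s ⊆ Set.Icc r (r + 1) := by
  rcases hs with h | h
  · rw [h]
  · rw [h]; exact Set.Ioo_subset_Icc_self

lemma gap {s t : Set ℝ} {r q : ℝ}
    (hs : s = Set.Icc r (r + 1) ∨ s = Set.Ioo r (r + 1))
    (ht : t = Set.Icc q (q + 1) ∨ t = Set.Ioo q (q + 1))
    (hd : s ∩ t = ∅) : r + 1 ≤ q ∨ q + 1 ≤ r := by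
  by_contra h
  push_neg at h
  obtain ⟨h1, h2⟩ := h
  set x := (max r q + (min r q + 1)) / 2 with hx
  have hmm : max r q < min r q + 1 := by
    rcases le_total r q with hh | hh
    · rw [max_eq_right hh, min_eq_left hh]; linarith
    · rw [max_eq_left hh, min_eq_right hh]; linarith
  have hxs : x ∈ s := mem_of_form hs
    ⟨by have := le_max_left r q; linarith, by have := min_le_left r q; linarith⟩
  have hxt : x ∈ t := mem_of_form ht
    ⟨by have := le_max_right r q; linarith, by have := min_le_right r q; linarith⟩
  have : x ∈ s ∩ t := ⟨hxs, hxt⟩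
  rw [hd] at this
  exact this

lemma bounds {s : Set ℝ} {r a : ℝ}
    (hs : s = Set.Icc r (r + 1) ∨ s = Set.Ioo r (r + 1))
    (h : (s ∩ Set.Icc a (a + 1)).Nonempty) : a - 1 ≤ r ∧ r ≤ a + 1 := by
  obtain ⟨x, hx1, hx2⟩ := h
  obtain ⟨h1, h2⟩ := sub_of_form hs hx1
  obtain ⟨h3, h4⟩ := hx2
  constructor <;> linarith

lemma sorted_case {a r0 r1 r2 : ℝ} {s0 s1 s2 : Set ℝ}
    (hs0 : s0 = Set.Icc r0 (r0 + 1) ∨ s0 = Set.Ioo r0 (r0 + 1))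
    (hs1 : s1 = Set.Icc r1 (r1 + 1) ∨ s1 = Set.Ioo r1 (r1 + 1))
    (hs2 : s2 = Set.Icc r2 (r2 + 1) ∨ s2 = Set.Ioo r2 (r2 + 1))
    (hd01 : s0 ∩ s1 = ∅) (hd12 : s1 ∩ s2 = ∅) (hd02 : s0 ∩ s2 = ∅)
    (hi0 : (s0 ∩ Set.Icc a (a + 1)).Nonempty)
    (hi1 : (s1 ∩ Set.Icc a (a + 1)).Nonempty)
    (hi2 : (s2 ∩ Set.Icc a (a + 1)).Nonempty)
    (h01 : r0 < r1) (h12 : r1 < r2) :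
    s0 = Set.Icc (a - 1) a ∧ s1 = Set.Ioo a (a + 1) ∧ s2 = Set.Icc (a + 1) (a + 2) := by
  obtain ⟨b0l, b0r⟩ := bounds hs0 hi0
  obtain ⟨b1l, b1r⟩ := bounds hs1 hi1
  obtain ⟨b2l, b2r⟩ := bounds hs2 hi2
  have g01 : r0 + 1 ≤ r1 := by rcases gap hs0 hs1 hd01 with h | h; exact h; linarith
  have g12 : r1 + 1 ≤ r2 := by rcases gap hs1 hs2 hd12 with h | h; exact h; linarith
  have e0 : r0 = a - 1 := by linarith
  have e1 : r1 = a := by linarith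
  have e2 : r2 = a + 1 := by linarith
  rw [e0] at hs0
  rw [e1] at hs1
  rw [e2] at hs2
  have hc0 : s0 = Set.Icc (a - 1) a := by
    rcases hs0 with h | h
    · rw [h]; norm_num
    · exfalso
      obtain ⟨x, hx1, hx2⟩ := hi0
      rw [h] at hx1
      obtain ⟨_, hxr⟩ := hx1
      obtain ⟨hxl, _⟩ := hx2
      linarith
  have hc2 : s2 = Set.Icc (a + 1) (a + 2) := by
    rcases hs2 with h | h
    · rw [h]; ring_nf
    · exfalso
      obtain ⟨x, hx1, hx2⟩ := hi2
      rw [h] at hx1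
      obtain ⟨hxl, _⟩ := hx1
      obtain ⟨_, hxr⟩ := hx2
      linarith
  have hc1 : s1 = Set.Ioo a (a + 1) := by
    rcases hs1 with h | h
    · exfalso
      have ha0 : a ∈ s0 := by rw [hc0]; exact ⟨by linarith, le_refl a⟩
      have ha1 : a ∈ s1 := by rw [h]; exact ⟨le_refl a, by linarith⟩
      have : a ∈ s0 ∩ s1 := ⟨ha0, ha1⟩
      rw [hd01] at this
      exact this
    · exact h
  exact ⟨hc0, hc1, hc2⟩

lemma perm_bac {α : Type*} (A B C : Set α) : ({B, A, C} : Set (Set α)) = {A, B, C} := by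
  ext x; simp only [Set.mem_insert_iff, Set.mem_singleton_iff]; tauto

lemma perm_acb {α : Type*} (A B C : Set α) : ({A, C, B} : Set (Set α)) = {A, B, C} := by
  ext x; simp only [Set.mem_insert_iff, Set.mem_singleton_iff]; tauto

lemma perm_bca {α : Type*} (A B C : Set α) : ({B, C, A} : Set (Set α)) = {A, B, C} := by
  ext x; simp only [Set.mem_insert_iff, Set.mem_singleton_iff]; tauto

lemma perm_cab {α : Type*} (A B C : Set α) : ({C, A, B} : Set (Set α)) = {A, B, C} := by
  ext x; simp only [Set.mem_insert_iff, Set.mem_singleton_iff]; tauto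

lemma perm_cba {α : Type*} (A B C : Set α) : ({C, B, A} : Set (Set α)) = {A, B, C} := by
  ext x; simp only [Set.mem_insert_iff, Set.mem_singleton_iff]; tauto

/-- Three pairwise-disjoint open/closed unit intervals all intersecting the
closed unit interval `[a, a+1]` are exactly `[a-1, a]`, `(a, a+1)`, `[a+1, a+2]`. -/
theorem stmt4 (a : ℝ) (s : Fin 3 → Set ℝ)
    (hunit : ∀ i, IsUnitInterval (s i))
    (hdisj : ∀ i j, i ≠ j → s i ∩ s j = ∅)
    (hint : ∀ i, (s i ∩ Set.Icc a (a + 1)).Nonempty) :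
    ({s 0, s 1, s 2} : Set (Set ℝ)) =
      {Set.Icc (a - 1) a, Set.Ioo a (a + 1), Set.Icc (a + 1) (a + 2)} := by
  obtain ⟨r0, h0⟩ := hunit 0
  obtain ⟨r1, h1⟩ := hunit 1
  obtain ⟨r2, h2⟩ := hunit 2
  have d01 := hdisj 0 1 (by decide)
  have d10 := hdisj 1 0 (by decide)
  have d02 := hdisj 0 2 (by decide)
  have d20 := hdisj 2 0 (by decide)
  have d12 := hdisj 1 2 (by decide)
  have d21 := hdisj 2 1 (by decide)
  have ne01 : r0 ≠ r1 := by rcases gap h0 h1 d01 with h | h <;> intro e <;> rw [e] at h <;> linarith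
  have ne02 : r0 ≠ r2 := by rcases gap h0 h2 d02 with h | h <;> intro e <;> rw [e] at h <;> linarith
  have ne12 : r1 ≠ r2 := by rcases gap h1 h2 d12 with h | h <;> intro e <;> rw [e] at h <;> linarith
  rcases lt_trichotomy r0 r1 with o01 | o01 | o01
  · rcases lt_trichotomy r1 r2 with o12 | o12 | o12
    · obtain ⟨e0, e1, e2⟩ := sorted_case h0 h1 h2 d01 d12 d02 (hint 0) (hint 1) (hint 2) o01 o12
      rw [e0, e1, e2]
    · exact absurd o12 ne12
    · rcases lt_trichotomy r0 r2 with o02 | o02 | o02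
      · -- r0 < r2 < r1 : s0 = A, s2 = B, s1 = C
        obtain ⟨e0, e2, e1⟩ := sorted_case h0 h2 h1 d02 d21 d01 (hint 0) (hint 2) (hint 1) o02 o12
        rw [e0, e1, e2, perm_acb]
      · exact absurd o02 ne02
      · -- r2 < r0 < r1 : s2 = A, s0 = B, s1 = C
        obtain ⟨e2, e0, e1⟩ := sorted_case h2 h0 h1 d20 d01 d21 (hint 2) (hint 0) (hint 1) o02 o01
        rw [e0, e1, e2, perm_bca]
  · exact absurd o01 ne01
  · rcases lt_trichotomy r0 r2 with o02 | o02 | o02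
    · -- r1 < r0 < r2 : s1 = A, s0 = B, s2 = C
      obtain ⟨e1, e0, e2⟩ := sorted_case h1 h0 h2 d10 d02 d12 (hint 1) (hint 0) (hint 2) o01 o02
      rw [e0, e1, e2, perm_bac]
    · exact absurd o02 ne02
    · rcases lt_trichotomy r1 r2 with o12 | o12 | o12
      · -- r1 < r2 < r0 : s1 = A, s2 = B, s0 = C
        obtain ⟨e1, e2, e0⟩ := sorted_case h1 h2 h0 d12 d20 d10 (hint 1) (hint 2) (hint 0) o12 o02
        rw [e0, e1, e2, perm_cab]
      · exact absurd o12 ne12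
      · -- r2 < r1 < r0 : s2 = A, s1 = B, s0 = C
        obtain ⟨e2, e1, e0⟩ := sorted_case h2 h1 h0 d21 d10 d20 (hint 2) (hint 1) (hint 0) o12 o01
        rw [e0, e1, e2, perm_cba]
end

section
/- Suppose a set of open/closed unit intervals admits a proper coloring with ω colors. Then for any interval x in the set, the number of intervals (other than x) intersecting x is at most 3ω - 3. -/
/-- If a family of open/closed unit intervals admits a proper coloring with
`ω` colors, then every interval intersects at most `3ω - 3` other intervals. -/
theorem stmt5 {ι : Type*} (f : ι → Set ℝ)
    (hunit : ∀ i, IsUnitInterval (f i)) (ω : ℕ) (C : ι → Fin ω)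
    (hC : ∀ i j, i ≠ j → (f i ∩ f j).Nonempty → C i ≠ C j) (x : ι) :
    {j | j ≠ x ∧ (f j ∩ f x).Nonempty}.Finite ∧
      {j | j ≠ x ∧ (f j ∩ f x).Nonempty}.ncard ≤ 3 * ω - 3 := by
  classical
  choose r hr using hunit
  have hmem : ∀ i, f i ⊆ Set.Icc (r i) (r i + 1) := by
    intro i
    rcases hr i with h | h
    · rw [h]
    · rw [h]; exact Set.Ioo_subset_Icc_self
  -- two unit intervals whose left endpoints are at distance < 1 intersect
  have hover : ∀ i j, |r i - r j| < 1 → (f i ∩ f j).Nonempty := by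
    intro i j hij
    rw [abs_lt] at hij
    set m : ℝ := (max (r i) (r j) + min (r i) (r j) + 1) / 2 with hm
    have h1 : r i ≤ max (r i) (r j) := le_max_left _ _
    have h2 : r j ≤ max (r i) (r j) := le_max_right _ _
    have h3 : min (r i) (r j) ≤ r i := min_le_left _ _
    have h4 : min (r i) (r j) ≤ r j := min_le_right _ _
    have h5 : max (r i) (r j) < min (r i) (r j) + 1 := by
      rcases le_total (r i) (r j) with h | h
      · rw [max_eq_right h, min_eq_left h]; linarith [hij.1]
      · rw [max_eq_left h, min_eq_right h]; linarith [hij.2]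
    have hi1 : r i < m := by rw [hm]; linarith
    have hi2 : m < r i + 1 := by rw [hm]; linarith
    have hj1 : r j < m := by rw [hm]; linarith
    have hj2 : m < r j + 1 := by rw [hm]; linarith
    refine ⟨m, ?_, ?_⟩
    · rcases hr i with h | h <;> rw [h]
      · exact ⟨le_of_lt hi1, le_of_lt hi2⟩
      · exact ⟨hi1, hi2⟩
    · rcases hr j with h | h <;> rw [h]
      · exact ⟨le_of_lt hj1, le_of_lt hj2⟩
      · exact ⟨hj1, hj2⟩
  set S : Set ι := {j | j ≠ x ∧ (f j ∩ f x).Nonempty} with hS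
  -- left endpoints of neighbours are within distance 1 of r x
  have hsub : ∀ j ∈ S, r x - 1 ≤ r j ∧ r j ≤ r x + 1 := by
    rintro j ⟨-, p, hpj, hpx⟩
    have h1 := hmem j hpj
    have h2 := hmem x hpx
    simp only [Set.mem_Icc] at h1 h2
    constructor <;> linarith [h1.1, h1.2, h2.1, h2.2]
  -- key clique lemma
  have key : ∀ T : Set ι, x ∉ T → (∀ j ∈ T, (f j ∩ f x).Nonempty) →
      (∀ j ∈ T, ∀ k ∈ T, j ≠ k → (f j ∩ f k).Nonempty) →
      T.Finite ∧ T.ncard ≤ ω - 1 := by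
    intro T hxT hTx hTT
    have hinj : Set.InjOn C T := by
      intro j hj k hk hjk
      by_contra hne
      exact hC j k hne (hTT j hj k hk hne) hjk
    have himg : C '' T ⊆ ↑(Finset.univ.erase (C x)) := by
      rintro c ⟨j, hj, rfl⟩
      simp only [Finset.coe_erase, Set.mem_diff, Set.mem_singleton_iff,
        Finset.coe_univ, Set.mem_univ, true_and]
      exact hC j x (fun h => hxT (h ▸ hj)) (hTx j hj)
    have hfin : T.Finite := Set.Finite.of_finite_image (Set.toFinite _) hinj
    refine ⟨hfin, ?_⟩
    calc T.ncard = (C '' T).ncard := (Set.ncard_image_of_injOn hinj).symm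
      _ ≤ (↑(Finset.univ.erase (C x)) : Set (Fin ω)).ncard :=
          Set.ncard_le_ncard himg (Set.toFinite _)
      _ = ω - 1 := by rw [Set.ncard_coe_finset]; simp
  -- three classes
  set T1 : Set ι := {j | j ∈ S ∧ r j < r x - 1/2} with hT1
  set T2 : Set ι := {j | j ∈ S ∧ r x - 1/2 ≤ r j ∧ r j < r x + 1/2} with hT2
  set T3 : Set ι := {j | j ∈ S ∧ r x + 1/2 ≤ r j} with hT3
  have hxS : x ∉ S := fun h => h.1 rfl
  have hcover : S = T1 ∪ T2 ∪ T3 := by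
    ext j
    simp only [hT1, hT2, hT3, Set.mem_union, Set.mem_setOf_eq]
    constructor
    · intro hj
      rcases lt_or_ge (r j) (r x - 1/2) with h | h
      · exact Or.inl (Or.inl ⟨hj, h⟩)
      rcases lt_or_ge (r j) (r x + 1/2) with h' | h'
      · exact Or.inl (Or.inr ⟨hj, h, h'⟩)
      · exact Or.inr ⟨hj, h'⟩
    · rintro ((⟨h, -⟩ | ⟨h, -⟩) | ⟨h, -⟩) <;> exact h
  have k1 : T1.Finite ∧ T1.ncard ≤ ω - 1 := by
    refine key T1 (fun h => hxS h.1) (fun j hj => hj.1.2) ?_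
    intro j hj k hk _
    have h1 := hsub j hj.1
    have h2 := hsub k hk.1
    exact hover j k (abs_lt.2 ⟨by linarith [hj.2, hk.2, h1.1, h2.1],
      by linarith [hj.2, hk.2, h1.1, h2.1]⟩)
  have k2 : T2.Finite ∧ T2.ncard ≤ ω - 1 := by
    refine key T2 (fun h => hxS h.1) (fun j hj => hj.1.2) ?_
    intro j hj k hk _
    exact hover j k (abs_lt.2 ⟨by linarith [hj.2.1, hj.2.2, hk.2.1, hk.2.2],
      by linarith [hj.2.1, hj.2.2, hk.2.1, hk.2.2]⟩)
  have k3 : T3.Finite ∧ T3.ncard ≤ ω - 1 := by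
    refine key T3 (fun h => hxS h.1) (fun j hj => hj.1.2) ?_
    intro j hj k hk _
    have h1 := hsub j hj.1
    have h2 := hsub k hk.1
    exact hover j k (abs_lt.2 ⟨by linarith [hj.2, hk.2, h1.2, h2.2],
      by linarith [hj.2, hk.2, h1.2, h2.2]⟩)
  have hfinS : S.Finite := by
    rw [hcover]; exact (k1.1.union k2.1).union k3.1
  refine ⟨hfinS, ?_⟩
  have hle : S.ncard ≤ T1.ncard + T2.ncard + T3.ncard := by
    rw [hcover]
    calc ((T1 ∪ T2) ∪ T3).ncard ≤ (T1 ∪ T2).ncard + T3.ncard :=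
          Set.ncard_union_le _ _
      _ ≤ T1.ncard + T2.ncard + T3.ncard := by
          have := Set.ncard_union_le T1 T2
          omega
  have := k1.2; have := k2.2; have := k3.2
  omega
end

section
/- Suppose a set of open/closed unit intervals admits a proper coloring with ω colors, and x is an open unit interval in the set. Then the number of intervals (other than x) intersecting x is at most 2ω - 2. -/
lemma clique_card {ι : Type*} {ω : ℕ} (C : ι → Fin ω) (c : Fin ω) (S : Set ι)
    (hinj : Set.InjOn C S) (hne : ∀ j ∈ S, C j ≠ c) :
    S.Finite ∧ S.ncard ≤ ω - 1 := by
  have hfin : S.Finite := Set.Finite.of_finite_image (Set.toFinite _) hinj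
  refine ⟨hfin, ?_⟩
  have h1 : S.ncard = (C '' S).ncard := (Set.ncard_image_of_injOn hinj).symm
  have h2 : C '' S ⊆ ({c}ᶜ : Set (Fin ω)) := by
    rintro _ ⟨j, hj, rfl⟩
    simpa using hne j hj
  have h3 : (C '' S).ncard ≤ (({c}ᶜ : Set (Fin ω))).ncard :=
    Set.ncard_le_ncard h2 (Set.toFinite _)
  have h4 : (({c}ᶜ : Set (Fin ω))).ncard = ω - 1 := by
    have := Set.ncard_add_ncard_compl ({c} : Set (Fin ω))
    simp [Set.ncard_univ, Set.ncard_singleton] at this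
    omega
  omega

/-- If a family of open/closed unit intervals admits a proper coloring with
`ω` colors and `x` is an open unit interval in the family, then `x` intersects
at most `2ω - 2` other intervals. -/
theorem stmt6 {ι : Type*} (f : ι → Set ℝ)
    (hunit : ∀ i, IsUnitInterval (f i)) (ω : ℕ) (C : ι → Fin ω)
    (hC : ∀ i j, i ≠ j → (f i ∩ f j).Nonempty → C i ≠ C j) (x : ι)
    (hx : ∃ a : ℝ, f x = Set.Ioo a (a + 1)) :
    {j | j ≠ x ∧ (f j ∩ f x).Nonempty}.Finite ∧
      {j | j ≠ x ∧ (f j ∩ f x).Nonempty}.ncard ≤ 2 * ω - 2 := by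
  obtain ⟨a, ha⟩ := hx
  set N := {j | j ≠ x ∧ (f j ∩ f x).Nonempty} with hN
  set S₁ := {j ∈ N | a ∈ f j ∨ f j = Set.Ioo a (a + 1)} with hS₁
  set S₂ := {j ∈ N | (a + 1) ∈ f j} with hS₂
  have hsub : N ⊆ S₁ ∪ S₂ := by
    intro j hj
    obtain ⟨hjx, t, htj, htx⟩ := hj
    rw [ha] at htx
    obtain ⟨htx1, htx2⟩ := htx
    obtain ⟨r, hr | hr⟩ := hunit j
    · rw [hr] at htj
      obtain ⟨h1, h2⟩ := htj
      by_cases hra : r ≤ a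
      · exact Or.inl ⟨⟨hjx, t, hr ▸ ⟨h1, h2⟩, ha ▸ ⟨htx1, htx2⟩⟩,
          Or.inl (hr ▸ ⟨hra, by linarith⟩)⟩
      · push_neg at hra
        exact Or.inr ⟨⟨hjx, t, hr ▸ ⟨h1, h2⟩, ha ▸ ⟨htx1, htx2⟩⟩,
          hr ▸ ⟨by linarith, by linarith⟩⟩
    · rw [hr] at htj
      obtain ⟨h1, h2⟩ := htj
      have hmem : j ∈ N := ⟨hjx, t, hr ▸ ⟨h1, h2⟩, ha ▸ ⟨htx1, htx2⟩⟩
      rcases lt_trichotomy r a with h | h | h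
      · exact Or.inl ⟨hmem, Or.inl (hr ▸ ⟨h, by linarith⟩)⟩
      · exact Or.inl ⟨hmem, Or.inr (by rw [hr, h])⟩
      · exact Or.inr ⟨hmem, hr ▸ ⟨by linarith, by linarith⟩⟩
  have hω : 1 ≤ ω := Fin.pos (C x)
  -- S₁ is a clique
  have hinj₁ : Set.InjOn C S₁ := by
    intro i hi j hj hij
    by_contra hne
    apply hC i j hne _ hij
    rcases hj.2 with hja | hjeq
    · rcases hi.2 with hia | hieq
      · exact ⟨a, hia, hja⟩
      · obtain ⟨t, ht1, ht2⟩ := hj.1.2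
        exact ⟨t, by rw [hieq, ← ha]; exact ht2, ht1⟩
    · obtain ⟨t, ht1, ht2⟩ := hi.1.2
      exact ⟨t, ht1, by rw [hjeq, ← ha]; exact ht2⟩
  have hinj₂ : Set.InjOn C S₂ := by
    intro i hi j hj hij
    by_contra hne
    exact hC i j hne ⟨a + 1, hi.2, hj.2⟩ hij
  have hnex₁ : ∀ j ∈ S₁, C j ≠ C x := fun j hj => hC j x hj.1.1 hj.1.2
  have hnex₂ : ∀ j ∈ S₂, C j ≠ C x := fun j hj => hC j x hj.1.1 hj.1.2
  obtain ⟨hf₁, hc₁⟩ := clique_card C (C x) S₁ hinj₁ hnex₁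
  obtain ⟨hf₂, hc₂⟩ := clique_card C (C x) S₂ hinj₂ hnex₂
  have hNfin : N.Finite := Set.Finite.subset (hf₁.union hf₂) hsub
  refine ⟨hNfin, ?_⟩
  have := Set.ncard_le_ncard hsub (hf₁.union hf₂)
  have := Set.ncard_union_le S₁ S₂
  omega
end

section
/- Let I be a set of open/closed unit intervals properly colorable with ω colors, and let x be an open interval in I. Then any greedy (FirstFit) coloring of the intersection graph of I, in any arrival order, assigns x a color at most 2ω - 1. -/
lemma unit_cover {s : Set ℝ} (hs : IsUnitInterval s) {a : ℝ}
    (h : (s ∩ Set.Ioo a (a+1)).Nonempty) :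
    a ∈ s ∨ (a+1) ∈ s ∨ s = Set.Ioo a (a+1) := by
  obtain ⟨t, hts, hta1, hta2⟩ := h
  obtain ⟨r, hr | hr⟩ := hs <;> subst hr <;> obtain ⟨h1, h2⟩ := hts
  · rcases le_or_gt r a with h | h
    · exact Or.inl ⟨h, by linarith⟩
    · exact Or.inr (Or.inl ⟨by linarith, by linarith⟩)
  · rcases lt_trichotomy r a with h | h | h
    · exact Or.inl ⟨h, by linarith⟩
    · subst h; exact Or.inr (Or.inr rfl)
    · exact Or.inr (Or.inl ⟨by linarith, by linarith⟩)

/-- FirstFit on a family of open/closed unit intervals that is properly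
`ω`-colorable assigns any open interval a color at most `2ω - 1`. -/
theorem stmt7 {ι : Type*} (f : ι → Set ℝ)
    (hunit : ∀ i, IsUnitInterval (f i)) (ω : ℕ) (C : ι → Fin ω)
    (hC : ∀ i j, i ≠ j → (f i ∩ f j).Nonempty → C i ≠ C j)
    (ord : ι → ℕ) (hord : Function.Injective ord) (c : ι → ℕ)
    (hc : ∀ i, c i = sInf {n : ℕ | 1 ≤ n ∧
      ∀ j, j ≠ i → (f i ∩ f j).Nonempty → ord j < ord i → c j ≠ n})
    (x : ι) (hx : ∃ a : ℝ, f x = Set.Ioo a (a + 1)) :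
    c x ≤ 2 * ω - 1 := by
  obtain ⟨a, hfx⟩ := hx
  have hω : 1 ≤ ω := (C x).pos
  set N : Set ι := {j | j ≠ x ∧ (f x ∩ f j).Nonempty ∧ ord j < ord x} with hN
  set A : Set ι := {j ∈ N | a ∈ f j ∨ f j = f x} with hA
  set B : Set ι := {j ∈ N | (a+1) ∈ f j} with hB
  have hNAB : N ⊆ A ∪ B := by
    intro j hj
    have hint : (f j ∩ Set.Ioo a (a+1)).Nonempty := by
      rw [← hfx, Set.inter_comm]; exact hj.2.1
    rcases unit_cover (hunit j) hint with h | h | h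
    · exact Or.inl ⟨hj, Or.inl h⟩
    · exact Or.inr ⟨hj, h⟩
    · exact Or.inl ⟨hj, Or.inr (h.trans hfx.symm)⟩
  -- clique property of insert x A
  have cliqueA : ∀ i ∈ insert x A, ∀ j ∈ insert x A, i ≠ j → (f i ∩ f j).Nonempty := by
    intro i hi j hj hij
    rcases hi with rfl | hi
    · rcases hj with rfl | hj
      · exact absurd rfl hij
      · exact hj.1.2.1
    · rcases hj with rfl | hj
      · rw [Set.inter_comm]; exact hi.1.2.1
      · rcases hi.2 with h1 | h1
        · rcases hj.2 with h2 | h2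
          · exact ⟨a, h1, h2⟩
          · rw [h2, Set.inter_comm]; exact hi.1.2.1
        · rw [h1]; exact hj.1.2.1
  have cliqueB : ∀ i ∈ insert x B, ∀ j ∈ insert x B, i ≠ j → (f i ∩ f j).Nonempty := by
    intro i hi j hj hij
    rcases hi with rfl | hi
    · rcases hj with rfl | hj
      · exact absurd rfl hij
      · exact hj.1.2.1
    · rcases hj with rfl | hj
      · rw [Set.inter_comm]; exact hi.1.2.1
      · exact ⟨a+1, hi.2, hj.2⟩
  have key : ∀ s : Set ι, (∀ i ∈ insert x s, ∀ j ∈ insert x s, i ≠ j → (f i ∩ f j).Nonempty) →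
      x ∉ s → s.Finite ∧ s.ncard ≤ ω - 1 := by
    intro s hclq hxs
    have hinj : Set.InjOn C (insert x s) := by
      intro i hi j hj hCij
      by_contra hne
      exact hC i j hne (hclq i hi j hj hne) hCij
    have hfin : (insert x s).Finite := by
      apply Set.Finite.of_finite_image _ hinj
      exact Set.Finite.subset Set.finite_univ (Set.subset_univ _)
    have hsfin : s.Finite := hfin.subset (Set.subset_insert _ _)
    refine ⟨hsfin, ?_⟩
    have h1 : (insert x s).ncard ≤ ω := by
      calc (insert x s).ncard = (C '' insert x s).ncard :=
            (Set.ncard_image_of_injOn hinj).symm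
        _ ≤ (Set.univ : Set (Fin ω)).ncard :=
            Set.ncard_le_ncard (Set.subset_univ _) Set.finite_univ
        _ = ω := by simp [Set.ncard_univ]
    rw [Set.ncard_insert_of_notMem hxs hsfin] at h1
    omega
  have hxA : x ∉ A := fun h => h.1.1 rfl
  have hxB : x ∉ B := fun h => h.1.1 rfl
  obtain ⟨hAfin, hAcard⟩ := key A cliqueA hxA
  obtain ⟨hBfin, hBcard⟩ := key B cliqueB hxB
  -- forbidden colors
  set F : Set ℕ := c '' N with hF
  have hFsub : F ⊆ c '' A ∪ c '' B := by
    rw [← Set.image_union]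
    exact Set.image_mono hNAB
  have hFfin : F.Finite := Set.Finite.subset ((hAfin.image c).union (hBfin.image c)) hFsub
  have hFcard : F.ncard ≤ 2 * ω - 2 := by
    calc F.ncard ≤ (c '' A ∪ c '' B).ncard :=
          Set.ncard_le_ncard hFsub ((hAfin.image c).union (hBfin.image c))
      _ ≤ (c '' A).ncard + (c '' B).ncard :=
          Set.ncard_union_le _ _
      _ ≤ A.ncard + B.ncard :=
          Nat.add_le_add (Set.ncard_image_le hAfin) (Set.ncard_image_le hBfin)
      _ ≤ 2 * ω - 2 := by omega
  -- find a free color in [1, 2ω-1]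
  have : ∃ n ∈ Finset.Icc 1 (2*ω-1), n ∉ F := by
    by_contra hcon
    push_neg at hcon
    have hsub : ↑(Finset.Icc 1 (2*ω-1)) ⊆ F := fun n hn => hcon n hn
    have := Set.ncard_le_ncard hsub hFfin
    rw [Set.ncard_coe_finset, Nat.card_Icc] at this
    omega
  obtain ⟨n, hn1, hn2⟩ := this
  rw [Finset.mem_Icc] at hn1
  have hmem : n ∈ {n : ℕ | 1 ≤ n ∧
      ∀ j, j ≠ x → (f x ∩ f j).Nonempty → ord j < ord x → c j ≠ n} := by
    refine ⟨hn1.1, fun j hj1 hj2 hj3 hcj => ?_⟩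
    exact hn2 ⟨j, ⟨hj1, hj2, hj3⟩, hcj⟩
  calc c x ≤ n := by rw [hc x]; exact Nat.sInf_le hmem
    _ ≤ 2 * ω - 1 := hn1.2
end

section
/- Let I be a set of open/closed unit intervals with integral endpoints that is properly colorable with ω colors. Then any FirstFit coloring of I assigns every interval a color at most 2ω. -/
open Finset

/-- Pure combinatorial core: contradiction from a maximal high value. -/
lemma ffCore {ω : ℕ} (P Aj Q O Bj B1 : Finset ℕ) (v s : ℕ)
    (hPA : P.card + Aj.card ≤ ω)
    (hQO : Q.card + O.card ≤ ω)
    (hAB : Aj.card + Bj.card ≤ ω)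
    (hQB1 : Q.card + B1.card ≤ ω)
    (cover_v : ∀ m, 1 ≤ m → m < v → m ∈ P ∪ Aj ∪ Q ∪ Bj)
    (cover_s : ∀ m, 1 ≤ m → m < s → m ∈ Aj ∪ Q ∪ O ∪ B1)
    (hBj_low : ∀ m ∈ Bj, m ≤ ω) (hB1_low : ∀ m ∈ B1, m ≤ ω)
    (hge1 : ∀ m, (m ∈ Aj ∨ m ∈ Q ∨ m ∈ O) → 1 ≤ m)
    (hlev : ∀ m, (m ∈ Aj ∨ m ∈ Q ∨ m ∈ O) → m ≤ v)
    (hv : 2*ω+1 ≤ v) (hvAj : v ∈ Aj)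
    (hsQ : s ∈ Q) (hsgt : ω < s)
    (hs_up : ∀ x, x ∈ P ∪ Q → ω < x → x ≤ s) :
    False := by
  classical
  set L : Finset ℕ := Finset.Icc 1 ω with hL
  set H : Finset ℕ := Finset.Ioc ω v with hH
  have hLcard : L.card = ω := by rw [hL, Nat.card_Icc]; omega
  have hHcard : H.card = v - ω := by rw [hH, Nat.card_Ioc]
  have hmemL : ∀ m, m ∈ L ↔ (1 ≤ m ∧ m ≤ ω) := by intro m; simp [hL]
  have hmemH : ∀ m, m ∈ H ↔ (ω < m ∧ m ≤ v) := by intro m; simp [hH]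
  -- partitions
  have hpart : ∀ X : Finset ℕ, (∀ m ∈ X, 1 ≤ m ∧ m ≤ v) →
      X.card = (X ∩ L).card + (X ∩ H).card := by
    intro X hX
    rw [← Finset.card_union_of_disjoint]
    · congr 1
      ext m
      simp only [Finset.mem_union, Finset.mem_inter, hmemL, hmemH]
      constructor
      · intro hm
        have := hX m hm
        by_cases hc : m ≤ ω
        · exact Or.inl ⟨hm, this.1, hc⟩
        · exact Or.inr ⟨hm, by omega, this.2⟩
      · rintro (⟨h, _⟩ | ⟨h, _⟩) <;> exact h
    · rw [Finset.disjoint_left]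
      intro m hm hm'
      simp only [Finset.mem_inter, hmemL, hmemH] at hm hm'
      omega
  have epa : Aj.card = (Aj ∩ L).card + (Aj ∩ H).card :=
    hpart Aj (fun m hm => ⟨hge1 m (Or.inl hm), hlev m (Or.inl hm)⟩)
  have epq : Q.card = (Q ∩ L).card + (Q ∩ H).card :=
    hpart Q (fun m hm => ⟨hge1 m (Or.inr (Or.inl hm)), hlev m (Or.inr (Or.inl hm))⟩)
  have epo : O.card = (O ∩ L).card + (O ∩ H).card :=
    hpart O (fun m hm => ⟨hge1 m (Or.inr (Or.inr hm)), hlev m (Or.inr (Or.inr hm))⟩)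
  -- i1 : H.card ≤ (H \ Aj).card + (Aj ∩ H).card
  have i1 : H.card ≤ (H \ Aj).card + (Aj ∩ H).card := by
    have hsub : H ⊆ (H \ Aj) ∪ (Aj ∩ H) := by
      intro m hm
      by_cases hc : m ∈ Aj
      · exact Finset.mem_union_right _ (Finset.mem_inter.2 ⟨hc, hm⟩)
      · exact Finset.mem_union_left _ (Finset.mem_sdiff.2 ⟨hm, hc⟩)
    calc H.card ≤ ((H \ Aj) ∪ (Aj ∩ H)).card := Finset.card_le_card hsub
    _ ≤ _ := Finset.card_union_le _ _
  -- C1 : H \ Aj ⊆ P ∪ Q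
  have C1 : H \ Aj ⊆ P ∪ Q := by
    intro m hm
    rw [Finset.mem_sdiff, hmemH] at hm
    obtain ⟨⟨hm1, hm2⟩, hm3⟩ := hm
    have hmv : m < v := lt_of_le_of_ne hm2 (fun h => hm3 (h ▸ hvAj))
    have := cover_v m (by omega) hmv
    simp only [Finset.mem_union] at this ⊢
    rcases this with ((h | h) | h) | h
    · exact Or.inl h
    · exact absurd h hm3
    · exact Or.inr h
    · exact absurd (hBj_low m h) (by omega)
  -- i2
  have i2 : (H \ Aj).card + ((P ∪ Q) ∩ L).card ≤ (P ∪ Q).card := by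
    rw [← Finset.card_union_of_disjoint]
    · apply Finset.card_le_card
      intro m hm
      rcases Finset.mem_union.1 hm with h | h
      · exact C1 h
      · exact (Finset.mem_inter.1 h).1
    · rw [Finset.disjoint_left]
      intro m hm hm'
      rw [Finset.mem_sdiff, hmemH] at hm
      rw [Finset.mem_inter, hmemL] at hm'
      omega
  -- i3 : L ⊆ ((P∪Q) ∩ L) ∪ (Aj ∩ L) ∪ Bj
  have i3 : L.card ≤ ((P ∪ Q) ∩ L).card + (Aj ∩ L).card + Bj.card := by
    have hsub : L ⊆ (((P ∪ Q) ∩ L) ∪ (Aj ∩ L)) ∪ Bj := by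
      intro m hm
      have hm' := (hmemL m).1 hm
      have hmv : m < v := by omega
      have := cover_v m hm'.1 hmv
      simp only [Finset.mem_union, Finset.mem_inter] at this ⊢
      rcases this with ((h | h) | h) | h
      · exact Or.inl (Or.inl ⟨Or.inl h, hm⟩)
      · exact Or.inl (Or.inr ⟨h, hm⟩)
      · exact Or.inl (Or.inl ⟨Or.inr h, hm⟩)
      · exact Or.inr h
    calc L.card ≤ _ := Finset.card_le_card hsub
    _ ≤ (((P ∪ Q) ∩ L) ∪ (Aj ∩ L)).card + Bj.card := Finset.card_union_le _ _
    _ ≤ _ := by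
        have := Finset.card_union_le ((P ∪ Q) ∩ L) (Aj ∩ L)
        omega
  have i5 : (P ∪ Q).card ≤ P.card + Q.card := Finset.card_union_le _ _
  -- i7 : H \ Aj ⊆ (Q ∩ H) ∪ (O ∩ H)
  have i7 : (H \ Aj).card ≤ (Q ∩ H).card + (O ∩ H).card := by
    have hsub : H \ Aj ⊆ (Q ∩ H) ∪ (O ∩ H) := by
      intro m hm
      have hmPQ := C1 hm
      rw [Finset.mem_sdiff, hmemH] at hm
      obtain ⟨⟨hm1, hm2⟩, hm3⟩ := hm
      have hms : m ≤ s := hs_up m hmPQ hm1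
      rcases eq_or_lt_of_le hms with h | h
      · subst h
        exact Finset.mem_union_left _ (Finset.mem_inter.2 ⟨hsQ, (hmemH m).2 ⟨hm1, hm2⟩⟩)
      · have := cover_s m (by omega) h
        simp only [Finset.mem_union] at this ⊢
        rcases this with ((h' | h') | h') | h'
        · exact absurd h' hm3
        · exact Or.inl (Finset.mem_inter.2 ⟨h', (hmemH m).2 ⟨hm1, hm2⟩⟩)
        · exact Or.inr (Finset.mem_inter.2 ⟨h', (hmemH m).2 ⟨hm1, hm2⟩⟩)
        · exact absurd (hB1_low m h') (by omega)
    calc (H \ Aj).card ≤ _ := Finset.card_le_card hsub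
    _ ≤ _ := Finset.card_union_le _ _
  -- i9 : L ⊆ (Aj ∩ L) ∪ (Q ∩ L) ∪ (O ∩ L) ∪ B1
  have i9 : L.card ≤ (Aj ∩ L).card + (Q ∩ L).card + (O ∩ L).card + B1.card := by
    have hsub : L ⊆ (((Aj ∩ L) ∪ (Q ∩ L)) ∪ (O ∩ L)) ∪ B1 := by
      intro m hm
      have hm' := (hmemL m).1 hm
      have := cover_s m hm'.1 (by omega)
      simp only [Finset.mem_union, Finset.mem_inter] at this ⊢
      rcases this with ((h | h) | h) | h
      · exact Or.inl (Or.inl (Or.inl ⟨h, hm⟩))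
      · exact Or.inl (Or.inl (Or.inr ⟨h, hm⟩))
      · exact Or.inl (Or.inr ⟨h, hm⟩)
      · exact Or.inr h
    calc L.card ≤ _ := Finset.card_le_card hsub
    _ ≤ (((Aj ∩ L) ∪ (Q ∩ L)) ∪ (O ∩ L)).card + B1.card := Finset.card_union_le _ _
    _ ≤ _ := by
        have h1 := Finset.card_union_le ((Aj ∩ L) ∪ (Q ∩ L)) (O ∩ L)
        have h2 := Finset.card_union_le (Aj ∩ L) (Q ∩ L)
        omega
  have i11 : (Aj ∩ H).card ≤ Aj.card := Finset.card_le_card (Finset.inter_subset_left)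
  omega


/-- Bound for the open-interval colors. -/
lemma bBound {ω : ℕ} (A B : ℤ → Finset ℕ)
    (hcapB : ∀ j, (A j).card + (B j).card ≤ ω)
    (hcovB : ∀ j v, v ∈ B j → ∀ m, 1 ≤ m → m < v → m ∈ A j ∪ B j) :
    ∀ j, ∀ v ∈ B j, v ≤ ω := by
  intro j v hv
  have hsub : Finset.Icc 1 v ⊆ A j ∪ B j := by
    intro m hm
    rw [Finset.mem_Icc] at hm
    rcases eq_or_lt_of_le hm.2 with h | h
    · subst h; exact Finset.mem_union_right _ hv
    · exact hcovB j v hv m hm.1 h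
  have h1 : (Finset.Icc 1 v).card = v := by rw [Nat.card_Icc]; omega
  have h2 := Finset.card_le_card hsub
  have h3 := Finset.card_union_le (A j) (B j)
  have := hcapB j
  omega

lemma colorBound {ω : ℕ} (A B : ℤ → Finset ℕ)
    (hA1 : ∀ j, ∀ m ∈ A j, 1 ≤ m)
    (hcapA : ∀ j, (A j).card + (A (j+1)).card ≤ ω)
    (hcapB : ∀ j, (A j).card + (B j).card ≤ ω)
    (hcovA : ∀ j v, v ∈ A j → ∀ m, 1 ≤ m → m < v →
      m ∈ A (j-1) ∪ A j ∪ A (j+1) ∪ B j)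
    (hcovB : ∀ j v, v ∈ B j → ∀ m, 1 ≤ m → m < v → m ∈ A j ∪ B j) :
    ∀ j, ∀ v ∈ A j, v ≤ 2*ω := by
  classical
  have hBlow : ∀ j, ∀ v ∈ B j, v ≤ ω := bBound A B hcapB hcovB
  have hAcard : ∀ j, (A j).card ≤ ω := by
    intro j
    have := hcapA j
    omega
  -- crude bound
  have hbnd : ∀ j, ∀ v ∈ A j, v ≤ 3*ω := by
    intro j v hv
    have hsub : Finset.Icc 1 v ⊆ ((A (j-1) ∪ A j) ∪ A (j+1)) ∪ B j := by
      intro m hm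
      rw [Finset.mem_Icc] at hm
      rcases eq_or_lt_of_le hm.2 with h | h
      · subst h
        exact Finset.mem_union_left _ (Finset.mem_union_left _ (Finset.mem_union_right _ hv))
      · have := hcovA j v hv m hm.1 h
        simp only [Finset.mem_union] at this ⊢
        tauto
    have h1 : (Finset.Icc 1 v).card = v := by rw [Nat.card_Icc]; omega
    have h2 := Finset.card_le_card hsub
    have h3 := Finset.card_union_le ((A (j-1) ∪ A j) ∪ A (j+1)) (B j)
    have h4 := Finset.card_union_le (A (j-1) ∪ A j) (A (j+1))
    have h5 := Finset.card_union_le (A (j-1)) (A j)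
    have h6 : (A (j-1)).card + (A j).card ≤ ω := by
      have := hcapA (j-1)
      have e : j - 1 + 1 = j := by ring
      rwa [e] at this
    have h7 := hAcard (j+1)
    have h8 := hcapB j
    omega
  -- main
  by_contra hcon
  push_neg at hcon
  obtain ⟨j0, v0, hv0, hgt0⟩ := hcon
  set Bad : Finset ℕ := (Finset.Icc (2*ω+1) (3*ω)).filter (fun w => ∃ j, w ∈ A j) with hBad
  have hBadmem : ∀ w, w ∈ Bad ↔ ((2*ω+1 ≤ w ∧ w ≤ 3*ω) ∧ ∃ j, w ∈ A j) := by
    intro w; simp [hBad]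
  have hne : Bad.Nonempty := by
    refine ⟨v0, (hBadmem v0).2 ⟨⟨by omega, hbnd j0 v0 hv0⟩, j0, hv0⟩⟩
  set v : ℕ := Bad.max' hne with hvdef
  obtain ⟨⟨hv1, _⟩, j, hvA⟩ := (hBadmem v).1 (Bad.max'_mem hne)
  -- global max property
  have hmax : ∀ (j' : ℤ) (w : ℕ), w ∈ A j' → w ≤ v := by
    intro j' w hw
    by_cases hc : 2*ω+1 ≤ w
    · exact Bad.le_max' w ((hBadmem w).2 ⟨⟨hc, hbnd j' w hw⟩, j', hw⟩)
    · omega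
  -- find a high side value
  have hHAne : ((Finset.Ioc ω v) \ A j).Nonempty := by
    rw [← Finset.card_pos]
    have hsub : (Finset.Ioc ω v) ⊆ ((Finset.Ioc ω v) \ A j) ∪ A j := by
      intro m hm
      by_cases hc : m ∈ A j
      · exact Finset.mem_union_right _ hc
      · exact Finset.mem_union_left _ (Finset.mem_sdiff.2 ⟨hm, hc⟩)
    have h1 := Finset.card_le_card hsub
    have h2 := Finset.card_union_le ((Finset.Ioc ω v) \ A j) (A j)
    have h3 : (Finset.Ioc ω v).card = v - ω := by rw [Nat.card_Ioc]
    have h4 := hAcard j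
    omega
  obtain ⟨x, hx⟩ := hHAne
  have hxPQ : x ∈ A (j-1) ∪ A (j+1) := by
    rw [Finset.mem_sdiff] at hx
    obtain ⟨hxH, hxA⟩ := hx
    rw [Finset.mem_Ioc] at hxH
    have hxv : x < v := lt_of_le_of_ne hxH.2 (fun h => hxA (h ▸ hvA))
    have := hcovA j v hvA x (by omega) hxv
    simp only [Finset.mem_union] at this ⊢
    rcases this with ((h | h) | h) | h
    · exact Or.inl h
    · exact absurd h hxA
    · exact Or.inr h
    · exact absurd (hBlow j x h) (by omega)
  have hUne : ((A (j-1) ∪ A (j+1)) ∩ (Finset.Ioc ω v)).Nonempty :=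
    ⟨x, Finset.mem_inter.2 ⟨hxPQ, (Finset.mem_sdiff.1 hx).1⟩⟩
  set s : ℕ := ((A (j-1) ∪ A (j+1)) ∩ (Finset.Ioc ω v)).max' hUne with hsdef
  have hsU := Finset.mem_inter.1 (((A (j-1) ∪ A (j+1)) ∩ (Finset.Ioc ω v)).max'_mem hUne)
  have hsgt : ω < s := (Finset.mem_Ioc.1 hsU.2).1
  have hs_up : ∀ y, y ∈ A (j-1) ∪ A (j+1) → ω < y → y ≤ s := by
    intro y hy hygt
    apply Finset.le_max'
    rw [Finset.mem_inter]
    refine ⟨hy, ?_⟩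
    rw [Finset.mem_Ioc]
    constructor
    · exact hygt
    · rcases Finset.mem_union.1 hy with h | h
      · exact hmax _ _ h
      · exact hmax _ _ h
  -- prepare common facts
  have ej1 : j - 1 + 1 = j := by ring
  have hPAcap : (A (j-1)).card + (A j).card ≤ ω := by
    have := hcapA (j-1); rwa [ej1] at this
  rcases Finset.mem_union.1 hsU.1 with hsP | hsQ
  · -- s ∈ A (j-1) : mirrored instantiation
    refine ffCore (A (j+1)) (A j) (A (j-1)) (A (j-2)) (B j) (B (j-1)) v s
      ?_ ?_ (hcapB j) ?_ ?_ ?_ (fun m hm => hBlow j m hm) (fun m hm => hBlow (j-1) m hm)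
      ?_ ?_ (by omega) hvA hsP hsgt ?_
    · -- (A (j+1)).card + (A j).card ≤ ω
      have := hcapA j; omega
    · -- (A (j-1)).card + (A (j-2)).card ≤ ω
      have := hcapA (j-2)
      have e : j - 2 + 1 = j - 1 := by ring
      rw [e] at this
      omega
    · -- (A (j-1)).card + (B (j-1)).card ≤ ω
      exact hcapB (j-1)
    · -- cover_v reordered
      intro m h1 h2
      have := hcovA j v hvA m h1 h2
      simp only [Finset.mem_union] at this ⊢
      tauto
    · -- cover_s at column j-1
      intro m h1 h2
      have := hcovA (j-1) s hsP m h1 h2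
      have e : j - 1 - 1 = j - 2 := by ring
      rw [e, ej1] at this
      simp only [Finset.mem_union] at this ⊢
      tauto
    · intro m hm
      rcases hm with h | h | h
      · exact hA1 j m h
      · exact hA1 (j-1) m h
      · exact hA1 (j-2) m h
    · intro m hm
      rcases hm with h | h | h
      · exact hmax j m h
      · exact hmax (j-1) m h
      · exact hmax (j-2) m h
    · intro y hy hygt
      apply hs_up y ?_ hygt
      simp only [Finset.mem_union] at hy ⊢
      tauto
  · -- s ∈ A (j+1) : direct instantiation
    refine ffCore (A (j-1)) (A j) (A (j+1)) (A (j+2)) (B j) (B (j+1)) v s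
      hPAcap ?_ (hcapB j) (hcapB (j+1)) ?_ ?_
      (fun m hm => hBlow j m hm) (fun m hm => hBlow (j+1) m hm)
      ?_ ?_ (by omega) hvA hsQ hsgt hs_up
    · -- (A (j+1)).card + (A (j+2)).card ≤ ω
      have := hcapA (j+1)
      have e : j + 1 + 1 = j + 2 := by ring
      rwa [e] at this
    · intro m h1 h2
      exact hcovA j v hvA m h1 h2
    · intro m h1 h2
      have := hcovA (j+1) s hsQ m h1 h2
      have e : j + 1 - 1 = j := by ring
      have e2 : j + 1 + 1 = j + 2 := by ring
      rwa [e, e2] at this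
    · intro m hm
      rcases hm with h | h | h
      · exact hA1 j m h
      · exact hA1 (j+1) m h
      · exact hA1 (j+2) m h
    · intro m hm
      rcases hm with h | h | h
      · exact hmax j m h
      · exact hmax (j+1) m h
      · exact hmax (j+2) m h

lemma IccNeIoo {n : ℤ} : Set.Icc (n:ℝ) (n+1) ≠ Set.Ioo (n:ℝ) (n+1) := by
  intro h
  have h1 : (n:ℝ) ∈ Set.Icc (n:ℝ) (n+1) := ⟨le_refl _, by linarith⟩
  rw [h] at h1
  exact absurd h1.1 (lt_irrefl _)

lemma sameBaseAdj {n : ℤ} {S T : Set ℝ}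
    (hS : S = Set.Icc (n:ℝ) (n+1) ∨ S = Set.Ioo (n:ℝ) (n+1))
    (hT : T = Set.Icc (n:ℝ) (n+1) ∨ T = Set.Ioo (n:ℝ) (n+1)) :
    (S ∩ T).Nonempty := by
  refine ⟨(n:ℝ) + 1/2, ?_, ?_⟩
  · rcases hS with h | h <;> rw [h]
    · exact ⟨by linarith, by linarith⟩
    · exact ⟨by linarith, by linarith⟩
  · rcases hT with h | h <;> rw [h]
    · exact ⟨by linarith, by linarith⟩
    · exact ⟨by linarith, by linarith⟩

lemma adjBaseAdj {n m : ℤ} {S T : Set ℝ}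
    (hS : S = Set.Icc (n:ℝ) (n+1)) (hT : T = Set.Icc (m:ℝ) (m+1))
    (h : m = n + 1) : (S ∩ T).Nonempty := by
  refine ⟨(n:ℝ) + 1, ?_, ?_⟩
  · rw [hS]; exact ⟨by linarith, le_refl _⟩
  · rw [hT]
    have hm : (m:ℝ) = (n:ℝ) + 1 := by exact_mod_cast h
    exact ⟨by linarith, by linarith⟩

lemma unitClassify {n m : ℤ} {S T : Set ℝ}
    (hS : S = Set.Icc (n:ℝ) (n+1) ∨ S = Set.Ioo (n:ℝ) (n+1))
    (hT : T = Set.Icc (m:ℝ) (m+1) ∨ T = Set.Ioo (m:ℝ) (m+1))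
    (hne : (S ∩ T).Nonempty) :
    m = n ∨ (S = Set.Icc (n:ℝ) (n+1) ∧ T = Set.Icc (m:ℝ) (m+1) ∧ (m = n+1 ∨ n = m+1)) := by
  obtain ⟨x, hxS, hxT⟩ := hne
  have hSb : (n:ℝ) ≤ x ∧ x ≤ (n:ℝ)+1 := by
    rcases hS with h | h <;> rw [h] at hxS
    · exact ⟨hxS.1, hxS.2⟩
    · exact ⟨le_of_lt hxS.1, le_of_lt hxS.2⟩
  have hTb : (m:ℝ) ≤ x ∧ x ≤ (m:ℝ)+1 := by
    rcases hT with h | h <;> rw [h] at hxT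
    · exact ⟨hxT.1, hxT.2⟩
    · exact ⟨le_of_lt hxT.1, le_of_lt hxT.2⟩
  have hmn : m ≤ n+1 := by
    have : (m:ℝ) ≤ (n:ℝ)+1 := le_trans hTb.1 hSb.2
    exact_mod_cast this
  have hnm : n ≤ m+1 := by
    have : (n:ℝ) ≤ (m:ℝ)+1 := le_trans hSb.1 hTb.2
    exact_mod_cast this
  rcases (by omega : m = n ∨ m = n+1 ∨ n = m+1) with h | h | h
  · exact Or.inl h
  · -- m = n+1 : x = n+1 forced, both must be closed
    have hm : (m:ℝ) = (n:ℝ)+1 := by exact_mod_cast h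
    have hx1 : x = (n:ℝ)+1 := le_antisymm hSb.2 (by linarith [hTb.1])
    rcases hS with h' | h'
    · rcases hT with h'' | h''
      · exact Or.inr ⟨h', h'', Or.inl h⟩
      · exfalso; rw [h''] at hxT; linarith [hxT.1]
    · exfalso; rw [h'] at hxS; linarith [hxS.2]
  · -- n = m+1 : x = m+1 forced
    have hm : (n:ℝ) = (m:ℝ)+1 := by exact_mod_cast h
    have hx1 : x = (m:ℝ)+1 := le_antisymm hTb.2 (by linarith [hSb.1])
    rcases hS with h' | h'
    · rcases hT with h'' | h''
      · exact Or.inr ⟨h', h'', Or.inr h⟩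
      · exfalso; rw [h''] at hxT; linarith [hxT.2]
    · exfalso; rw [h'] at hxS; linarith [hxS.1]

/-- counting lemma: a set of values all realizable on a clique has size ≤ ω. -/
lemma cardHost {ι : Type*} {ω : ℕ} (C : ι → Fin ω) (c : ι → ℕ)
    (V : Finset ℕ) (P : ι → Prop)
    (hhost : ∀ v ∈ V, ∃ k, P k ∧ c k = v)
    (hCdiff : ∀ k k', P k → P k' → c k ≠ c k' → C k ≠ C k') :
    V.card ≤ ω := by
  classical
  choose g hg1 hg2 using hhost
  have hinj : Function.Injective (fun x : {y // y ∈ V} => C (g x.1 x.2)) := by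
    intro x y hxy
    by_contra hne
    have hvals : (x : ℕ) ≠ (y : ℕ) := fun h => hne (Subtype.ext h)
    have hcc : c (g x.1 x.2) ≠ c (g y.1 y.2) := by
      rw [hg2 x.1 x.2, hg2 y.1 y.2]; exact hvals
    exact hCdiff _ _ (hg1 x.1 x.2) (hg1 y.1 y.2) hcc hxy
  calc V.card = Fintype.card {y // y ∈ V} := (Fintype.card_coe V).symm
  _ ≤ Fintype.card (Fin ω) := Fintype.card_le_of_injective _ hinj
  _ = ω := Fintype.card_fin ω



/-- FirstFit on a family of open/closed unit intervals with integral endpoints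
that is properly `ω`-colorable assigns every interval a color at most `2ω`. -/
theorem stmt8 {ι : Type*} (f : ι → Set ℝ)
    (hunit : ∀ i, ∃ n : ℤ, f i = Set.Icc (n : ℝ) (n + 1) ∨ f i = Set.Ioo (n : ℝ) (n + 1))
    (ω : ℕ) (C : ι → Fin ω)
    (hC : ∀ i j, i ≠ j → (f i ∩ f j).Nonempty → C i ≠ C j)
    (ord : ι → ℕ) (hord : Function.Injective ord) (c : ι → ℕ)
    (hc : ∀ i, c i = sInf {n : ℕ | 1 ≤ n ∧
      ∀ j, j ≠ i → (f i ∩ f j).Nonempty → ord j < ord i → c j ≠ n})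
    (x : ι) :
    c x ≤ 2 * ω := by
  classical
  choose bse hb using hunit
  -- First-fit facts
  have ffMem : ∀ i : ι, 1 ≤ c i ∧
      ∀ k, k ≠ i → (f i ∩ f k).Nonempty → ord k < ord i → c k ≠ c i := by
    intro i
    have hfin : {k : ι | ord k < ord i}.Finite := by
      have he : {k : ι | ord k < ord i} = ord ⁻¹' (Set.Iio (ord i)) := rfl
      rw [he]
      exact Set.Finite.preimage (Set.injOn_of_injective hord) (Set.finite_Iio _)
    have hfc : (c '' {k : ι | ord k < ord i}).Finite := hfin.image c
    set T : Finset ℕ := hfc.toFinset with hT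
    have hmemT : ∀ k, ord k < ord i → c k ∈ T := by
      intro k hk
      rw [hT, Set.Finite.mem_toFinset]
      exact ⟨k, hk, rfl⟩
    have hS : (T.sup id + 1) ∈ {n : ℕ | 1 ≤ n ∧
        ∀ j, j ≠ i → (f i ∩ f j).Nonempty → ord j < ord i → c j ≠ n} := by
      constructor
      · omega
      · intro k _ _ hk
        have := Finset.le_sup (f := id) (hmemT k hk)
        simp only [id] at this
        omega
    have hmemInf : c i ∈ {n : ℕ | 1 ≤ n ∧
        ∀ j, j ≠ i → (f i ∩ f j).Nonempty → ord j < ord i → c j ≠ n} := by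
      rw [hc i]
      exact Nat.sInf_mem ⟨_, hS⟩
    exact hmemInf
  have ffBelow : ∀ i m, 1 ≤ m → m < c i →
      ∃ k, k ≠ i ∧ (f i ∩ f k).Nonempty ∧ ord k < ord i ∧ c k = m := by
    intro i m h1 h2
    by_contra hcon
    push_neg at hcon
    have hmem : m ∈ {n : ℕ | 1 ≤ n ∧
        ∀ j, j ≠ i → (f i ∩ f j).Nonempty → ord j < ord i → c j ≠ n} :=
      ⟨h1, fun k hk hadj hlt => hcon k hk hadj hlt⟩
    have := Nat.sInf_le hmem
    rw [← hc i] at this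
    omega
  have ffDiff : ∀ k k', k ≠ k' → (f k ∩ f k').Nonempty → c k ≠ c k' := by
    intro k k' hne hadj
    rcases lt_trichotomy (ord k) (ord k') with h | h | h
    · exact fun hcc => (ffMem k').2 k hne (by rwa [Set.inter_comm] at hadj) h hcc
    · exact absurd (hord h) hne
    · exact fun hcc => (ffMem k).2 k' hne.symm hadj h hcc.symm
  -- value sets
  have hfinA : ∀ j : ℤ, {m : ℕ | ∃ k, f k = Set.Icc ((bse k : ℝ)) (bse k + 1) ∧
      bse k = j ∧ c k = m}.Finite := by
    intro j
    have h1 : {m : ℕ | ∃ k, f k = Set.Icc ((bse k : ℝ)) (bse k + 1) ∧ bse k = j ∧ c k = m}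
        = c '' {k | f k = Set.Icc ((bse k : ℝ)) (bse k + 1) ∧ bse k = j} := by
      ext m
      simp only [Set.mem_setOf_eq, Set.mem_image]
      constructor
      · rintro ⟨k, h1, h2, h3⟩; exact ⟨k, ⟨h1, h2⟩, h3⟩
      · rintro ⟨k, ⟨h1, h2⟩, h3⟩; exact ⟨k, h1, h2, h3⟩
    rw [h1]
    apply Set.Finite.image
    apply Set.Finite.of_finite_image (f := C) (Set.toFinite _)
    intro k hk k' hk' hCkk
    by_contra hne
    exact hC k k' hne (sameBaseAdj (n := j)
      (Or.inl (by rw [← hk.2]; exact hk.1)) (Or.inl (by rw [← hk'.2]; exact hk'.1))) hCkk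
  have hfinB : ∀ j : ℤ, {m : ℕ | ∃ k, f k = Set.Ioo ((bse k : ℝ)) (bse k + 1) ∧
      bse k = j ∧ c k = m}.Finite := by
    intro j
    have h1 : {m : ℕ | ∃ k, f k = Set.Ioo ((bse k : ℝ)) (bse k + 1) ∧ bse k = j ∧ c k = m}
        = c '' {k | f k = Set.Ioo ((bse k : ℝ)) (bse k + 1) ∧ bse k = j} := by
      ext m
      simp only [Set.mem_setOf_eq, Set.mem_image]
      constructor
      · rintro ⟨k, h1, h2, h3⟩; exact ⟨k, ⟨h1, h2⟩, h3⟩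
      · rintro ⟨k, ⟨h1, h2⟩, h3⟩; exact ⟨k, h1, h2, h3⟩
    rw [h1]
    apply Set.Finite.image
    apply Set.Finite.of_finite_image (f := C) (Set.toFinite _)
    intro k hk k' hk' hCkk
    by_contra hne
    exact hC k k' hne (sameBaseAdj (n := j)
      (Or.inr (by rw [← hk.2]; exact hk.1)) (Or.inr (by rw [← hk'.2]; exact hk'.1))) hCkk
  obtain ⟨A, hA⟩ : ∃ A : ℤ → Finset ℕ, ∀ j m, m ∈ A j ↔
      ∃ k, f k = Set.Icc ((bse k : ℝ)) (bse k + 1) ∧ bse k = j ∧ c k = m :=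
    ⟨fun j => (hfinA j).toFinset, fun j m => Set.Finite.mem_toFinset _⟩
  obtain ⟨B, hB⟩ : ∃ B : ℤ → Finset ℕ, ∀ j m, m ∈ B j ↔
      ∃ k, f k = Set.Ioo ((bse k : ℝ)) (bse k + 1) ∧ bse k = j ∧ c k = m :=
    ⟨fun j => (hfinB j).toFinset, fun j m => Set.Finite.mem_toFinset _⟩
  -- hypotheses of colorBound
  have hA1 : ∀ j : ℤ, ∀ m ∈ A j, 1 ≤ m := by
    intro j m hm
    obtain ⟨k, _, _, h3⟩ := (hA j m).1 hm
    have := (ffMem k).1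
    omega
  have hdisjA : ∀ j : ℤ, Disjoint (A j) (A (j+1)) := by
    intro j
    rw [Finset.disjoint_left]
    intro m hm hm'
    obtain ⟨k, hk1, hk2, hk3⟩ := (hA j m).1 hm
    obtain ⟨k', hk1', hk2', hk3'⟩ := (hA (j+1) m).1 hm'
    have hne : k ≠ k' := by intro h; subst h; omega
    have hadj : (f k ∩ f k').Nonempty := adjBaseAdj hk1 hk1' (by omega)
    exact ffDiff k k' hne hadj (by rw [hk3, hk3'])
  have hdisjB : ∀ j : ℤ, Disjoint (A j) (B j) := by
    intro j
    rw [Finset.disjoint_left]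
    intro m hm hm'
    obtain ⟨k, hk1, hk2, hk3⟩ := (hA j m).1 hm
    obtain ⟨k', hk1', hk2', hk3'⟩ := (hB j m).1 hm'
    have hne : k ≠ k' := by
      intro h; subst h
      rw [hk1] at hk1'
      exact IccNeIoo hk1'
    have hadj : (f k ∩ f k').Nonempty :=
      sameBaseAdj (n := j) (Or.inl (by rw [← hk2]; exact hk1))
        (Or.inr (by rw [← hk2']; exact hk1'))
    exact ffDiff k k' hne hadj (by rw [hk3, hk3'])
  have hcapA : ∀ j : ℤ, (A j).card + (A (j+1)).card ≤ ω := by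
    intro j
    rw [← Finset.card_union_of_disjoint (hdisjA j)]
    apply cardHost C c _ (fun k => f k = Set.Icc ((bse k : ℝ)) (bse k + 1) ∧
      (bse k = j ∨ bse k = j+1))
    · intro v hv
      rcases Finset.mem_union.1 hv with h | h
      · obtain ⟨k, h1, h2, h3⟩ := (hA j v).1 h
        exact ⟨k, ⟨h1, Or.inl h2⟩, h3⟩
      · obtain ⟨k, h1, h2, h3⟩ := (hA (j+1) v).1 h
        exact ⟨k, ⟨h1, Or.inr h2⟩, h3⟩
    · rintro k k' ⟨hk, hbk⟩ ⟨hk', hbk'⟩ hcc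
      have hne : k ≠ k' := fun h => hcc (by rw [h])
      have hadj : (f k ∩ f k').Nonempty := by
        rcases hbk with h | h <;> rcases hbk' with h' | h'
        · exact sameBaseAdj (n := j) (Or.inl (by rw [← h]; exact hk))
            (Or.inl (by rw [← h']; exact hk'))
        · exact adjBaseAdj hk hk' (by omega)
        · have := adjBaseAdj hk' hk (by omega)
          rwa [Set.inter_comm] at this
        · exact sameBaseAdj (n := j+1) (Or.inl (by rw [← h]; exact hk))
            (Or.inl (by rw [← h']; exact hk'))
      exact hC k k' hne hadj
  have hcapB : ∀ j : ℤ, (A j).card + (B j).card ≤ ω := by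
    intro j
    rw [← Finset.card_union_of_disjoint (hdisjB j)]
    apply cardHost C c _ (fun k => bse k = j)
    · intro v hv
      rcases Finset.mem_union.1 hv with h | h
      · obtain ⟨k, h1, h2, h3⟩ := (hA j v).1 h
        exact ⟨k, h2, h3⟩
      · obtain ⟨k, h1, h2, h3⟩ := (hB j v).1 h
        exact ⟨k, h2, h3⟩
    · intro k k' hk hk' hcc
      have hne : k ≠ k' := fun h => hcc (by rw [h])
      have hadj : (f k ∩ f k').Nonempty :=
        sameBaseAdj (n := j) (by rw [← hk]; exact hb k) (by rw [← hk']; exact hb k')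
      exact hC k k' hne hadj
  -- coverage
  have hcovA : ∀ (j : ℤ) (v : ℕ), v ∈ A j → ∀ m, 1 ≤ m → m < v →
      m ∈ A (j-1) ∪ A j ∪ A (j+1) ∪ B j := by
    intro j v hv m h1 h2
    obtain ⟨k, hk1, hk2, hk3⟩ := (hA j v).1 hv
    obtain ⟨k', hne, hadj, hlt, hck'⟩ := ffBelow k m h1 (by omega)
    have hclass := unitClassify (hb k) (hb k') hadj
    simp only [Finset.mem_union]
    rcases hclass with h | ⟨hk_icc, hk'_icc, h⟩
    · -- same base : k' base j
      rcases hb k' with h' | h'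
      · exact Or.inl (Or.inl (Or.inr ((hA j m).2 ⟨k', h', by omega, hck'⟩)))
      · exact Or.inr ((hB j m).2 ⟨k', h', by omega, hck'⟩)
    · rcases h with h | h
      · exact Or.inl (Or.inr ((hA (j+1) m).2 ⟨k', hk'_icc, by omega, hck'⟩))
      · exact Or.inl (Or.inl (Or.inl ((hA (j-1) m).2 ⟨k', hk'_icc, by omega, hck'⟩)))
  have hcovB : ∀ (j : ℤ) (v : ℕ), v ∈ B j → ∀ m, 1 ≤ m → m < v →
      m ∈ A j ∪ B j := by
    intro j v hv m h1 h2
    obtain ⟨k, hk1, hk2, hk3⟩ := (hB j v).1 hv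
    obtain ⟨k', hne, hadj, hlt, hck'⟩ := ffBelow k m h1 (by omega)
    have hclass := unitClassify (hb k) (hb k') hadj
    simp only [Finset.mem_union]
    rcases hclass with h | ⟨hk_icc, _, _⟩
    · rcases hb k' with h' | h'
      · exact Or.inl ((hA j m).2 ⟨k', h', by omega, hck'⟩)
      · exact Or.inr ((hB j m).2 ⟨k', h', by omega, hck'⟩)
    · exfalso
      rw [hk1] at hk_icc
      exact IccNeIoo hk_icc.symm
  -- conclude
  rcases hb x with hx | hx
  · exact colorBound A B hA1 hcapA hcapB hcovA hcovB (bse x) (c x)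
      ((hA (bse x) (c x)).2 ⟨x, hx, rfl, rfl⟩)
  · have := bBound A B hcapB hcovB (bse x) (c x)
      ((hB (bse x) (c x)).2 ⟨x, hx, rfl, rfl⟩)
    omega
end

section
/- Fix a proper coloring of a set I of open/closed unit intervals into ω rows, and let x ∈ I with FirstFit color c(x). If r_3(x) < r_1(x) + 2, then c(x) ≤ 2ω. -/
/-- `nbRows f C x k` is the number of rows (color classes of `C`) containing
exactly `k` intervals intersecting `f x` (other than `x` itself). -/
noncomputable def nbRows {ι : Type*} (f : ι → Set ℝ) {ω : ℕ} (C : ι → Fin ω) (x : ι) (k : ℕ) : ℕ :=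
  {ρ : Fin ω | ({j | j ≠ x ∧ C j = ρ ∧ (f j ∩ f x).Nonempty}).ncard = k}.ncard

lemma aux_overlap (u v : ℝ) (h1 : u ≤ v) (h2 : v < u + 1) :
    ((v + u + 1)/2) ∈ Set.Ioo u (u+1) ∩ Set.Ioo v (v+1) := by
  refine ⟨⟨?_, ?_⟩, ?_, ?_⟩ <;> linarith

/-- If `r₃(x) < r₁(x) + 2` then the FirstFit color of `x` is at most `2ω`. -/
theorem stmt12 {ι : Type*} (f : ι → Set ℝ)
    (hunit : ∀ i, IsUnitInterval (f i)) (ω : ℕ) (C : ι → Fin ω)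
    (hC : ∀ i j, i ≠ j → (f i ∩ f j).Nonempty → C i ≠ C j)
    (ord : ι → ℕ) (hord : Function.Injective ord) (c : ι → ℕ)
    (hc : ∀ i, c i = sInf {n : ℕ | 1 ≤ n ∧
      ∀ j, j ≠ i → (f i ∩ f j).Nonempty → ord j < ord i → c j ≠ n})
    (x : ι) (hr : nbRows f C x 3 < nbRows f C x 1 + 2) :
    c x ≤ 2 * ω := by
  classical
  -- left endpoints
  set a : ι → ℝ := fun i => Classical.choose (hunit i) with ha_def
  have ha : ∀ i, f i = Set.Icc (a i) (a i + 1) ∨ f i = Set.Ioo (a i) (a i + 1) :=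
    fun i => Classical.choose_spec (hunit i)
  have hsub : ∀ i, f i ⊆ Set.Icc (a i) (a i + 1) := by
    intro i; rcases ha i with h | h <;> rw [h]
    all_goals exact Set.Ioo_subset_Icc_self
  have hsup : ∀ i, Set.Ioo (a i) (a i + 1) ⊆ f i := by
    intro i; rcases ha i with h | h <;> rw [h]
    all_goals exact Set.Ioo_subset_Icc_self
  have hmeet : ∀ i j, a i ≤ a j → a j < a i + 1 → (f i ∩ f j).Nonempty := by
    intro i j h1 h2
    obtain ⟨m1, m2⟩ := aux_overlap (a i) (a j) h1 h2
    exact ⟨_, hsup i m1, hsup j m2⟩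
  set r : ℝ := a x with hr_def
  -- the rows
  set S : Fin ω → Set ι := fun ρ => {j | j ≠ x ∧ C j = ρ ∧ (f j ∩ f x).Nonempty} with hS_def
  set cnt : Fin ω → ℕ := fun ρ => (S ρ).ncard with hcnt_def
  -- endpoint bounds for neighbours
  have hbnd : ∀ j, (f j ∩ f x).Nonempty → r - 1 ≤ a j ∧ a j ≤ r + 1 := by
    intro j ⟨t, htj, htx⟩
    have h1 := hsub j htj
    have h2 := hsub x htx
    simp only [Set.mem_Icc] at h1 h2
    constructor <;> linarith [h1.1, h1.2, h2.1, h2.2]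
  -- classify neighbours into 3 classes
  set g : ι → Fin 3 := fun j => if a j < r then 0 else if a j < r + 1 then 1 else 2 with hg_def
  have hinj : ∀ ρ, Set.InjOn g (S ρ) := by
    intro ρ j hj j' hj' hg
    by_contra hne
    obtain ⟨hj1, hj2, hj3⟩ := hj
    obtain ⟨hj'1, hj'2, hj'3⟩ := hj'
    have hb := hbnd j hj3
    have hb' := hbnd j' hj'3
    have hclose : a j' < a j + 1 ∧ a j < a j' + 1 := by
      simp only [hg_def] at hg
      split_ifs at hg with h1 h2 h3 h4 h5 h6 h7 <;>
        first
          | (exact absurd hg (by decide))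
          | (constructor <;> linarith [hb.1, hb.2, hb'.1, hb'.2])
    have hmeets : (f j ∩ f j').Nonempty := by
      rcases le_total (a j) (a j') with h | h
      · exact hmeet j j' h hclose.1
      · exact (hmeet j' j h hclose.2).imp (fun t ht => ⟨ht.2, ht.1⟩)
    exact hC j j' hne hmeets (hj2.trans hj'2.symm)
  have hSfin : ∀ ρ, (S ρ).Finite := by
    intro ρ
    exact Set.Finite.of_finite_image (Set.toFinite _) (hinj ρ)
  have hcnt3 : ∀ ρ, cnt ρ ≤ 3 := by
    intro ρ
    have h1 : (S ρ).ncard = (g '' S ρ).ncard := (Set.ncard_image_of_injOn (hinj ρ)).symm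
    have h2 : (g '' S ρ).ncard ≤ (Set.univ : Set (Fin 3)).ncard :=
      Set.ncard_le_ncard (Set.subset_univ _) Set.finite_univ
    have h3 : (Set.univ : Set (Fin 3)).ncard = 3 := by
      rw [Set.ncard_univ]; simp
    simp only [hcnt_def]
    omega
  -- fiber counts
  set rk : ℕ → ℕ := fun k => (Finset.univ.filter (fun ρ => cnt ρ = k)).card with hrk_def
  have hrk : ∀ k, rk k = (Finset.univ.filter (fun ρ => cnt ρ = k)).card := fun k => rfl
  have hnb : ∀ k, nbRows f C x k = rk k := by
    intro k
    rw [nbRows, hrk k, ← Set.ncard_coe_finset]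
    congr 1
    ext ρ
    simp [hcnt_def, hS_def]
  -- sum of fibers is ω
  have hsum : rk 0 + rk 1 + rk 2 + rk 3 = ω := by
    have h := Finset.card_eq_sum_card_fiberwise
      (f := cnt) (s := Finset.univ) (t := Finset.range 4)
      (fun ρ _ => Finset.mem_range.mpr (by have := hcnt3 ρ; omega))
    simp only [Finset.card_univ, Fintype.card_fin] at h
    rw [Finset.sum_range_succ, Finset.sum_range_succ, Finset.sum_range_succ,
      Finset.sum_range_one] at h
    rw [hrk 0, hrk 1, hrk 2, hrk 3]
    omega
  -- row of x is empty
  have hr0 : 1 ≤ rk 0 := by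
    have hempty : S (C x) = ∅ := by
      ext j
      simp only [hS_def, Set.mem_setOf_eq, Set.mem_empty_iff_false, iff_false]
      rintro ⟨h1, h2, h3⟩
      exact hC j x h1 h3 h2
    have : C x ∈ Finset.univ.filter (fun ρ => cnt ρ = 0) := by
      simp [hcnt_def, hempty]
    exact Finset.card_pos.mpr ⟨_, this⟩
  -- total neighbour count
  set NF : Finset ι := Finset.univ.biUnion (fun ρ => (hSfin ρ).toFinset) with hNF_def
  have hNFcard : NF.card ≤ rk 1 + 2 * rk 2 + 3 * rk 3 := by
    calc NF.card ≤ ∑ ρ : Fin ω, (hSfin ρ).toFinset.card := Finset.card_biUnion_le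
      _ = ∑ ρ : Fin ω, cnt ρ := by
          apply Finset.sum_congr rfl
          intro ρ _
          rw [hcnt_def, ← Set.ncard_eq_toFinset_card (S ρ) (hSfin ρ)]
      _ = ∑ k ∈ Finset.range 4, ∑ ρ ∈ Finset.univ.filter (fun ρ => cnt ρ = k), cnt ρ := by
          exact (Finset.sum_fiberwise_of_maps_to
            (fun ρ _ => Finset.mem_range.mpr (by have := hcnt3 ρ; omega)) cnt).symm
      _ = ∑ k ∈ Finset.range 4, k * rk k := by
          apply Finset.sum_congr rfl
          intro k _
          rw [Finset.sum_congr rfl (fun ρ hρ => (Finset.mem_filter.mp hρ).2),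
            Finset.sum_const, smul_eq_mul, hrk_def, mul_comm]
      _ = rk 1 + 2 * rk 2 + 3 * rk 3 := by
          rw [Finset.sum_range_succ, Finset.sum_range_succ, Finset.sum_range_succ,
            Finset.sum_range_one]
          ring
  -- earlier neighbours
  set E : Set ι := {j | j ≠ x ∧ (f x ∩ f j).Nonempty ∧ ord j < ord x} with hE_def
  have hEN : E ⊆ ↑NF := by
    intro j hj
    obtain ⟨h1, h2, _⟩ := hj
    have hjS : j ∈ S (C j) := ⟨h1, rfl, h2.imp (fun t ht => ⟨ht.2, ht.1⟩)⟩
    simp only [hNF_def, Finset.coe_biUnion, Finset.coe_univ, Set.mem_iUnion]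
    exact ⟨C j, trivial, (hSfin (C j)).mem_toFinset.mpr hjS⟩
  have hEfin : E.Finite := Set.Finite.subset NF.finite_toSet hEN
  set M : ℕ := hEfin.toFinset.card with hM_def
  have hME : M ≤ NF.card := by
    apply Finset.card_le_card
    intro j hj
    exact hEN (hEfin.mem_toFinset.mp hj)
  have hkey : M + 1 ≤ 2 * ω := by
    rw [hnb 1, hnb 3] at hr
    simp only [hrk] at hr hr0 hNFcard hsum
    omega
  -- find a free colour
  have hcandne : ((Finset.Icc 1 (M + 1)) \ (hEfin.toFinset.image c)).Nonempty := by
    rw [← Finset.card_pos]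
    have h1 : (Finset.Icc 1 (M + 1)).card = M + 1 := by
      rw [Nat.card_Icc]; omega
    have h2 : (hEfin.toFinset.image c).card ≤ M := Finset.card_image_le
    have := Finset.le_card_sdiff (hEfin.toFinset.image c) (Finset.Icc 1 (M + 1))
    omega
  obtain ⟨n, hn⟩ := hcandne
  rw [Finset.mem_sdiff, Finset.mem_Icc] at hn
  obtain ⟨⟨hn1, hn2⟩, hn3⟩ := hn
  have hnT : n ∈ {n : ℕ | 1 ≤ n ∧
      ∀ j, j ≠ x → (f x ∩ f j).Nonempty → ord j < ord x → c j ≠ n} := by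
    refine ⟨hn1, fun j h1 h2 h3 hcj => ?_⟩
    apply hn3
    exact Finset.mem_image.mpr ⟨j, hEfin.mem_toFinset.mpr ⟨h1, h2, h3⟩, hcj⟩
  calc c x ≤ n := by rw [hc x]; exact Nat.sInf_le hnT
    _ ≤ M + 1 := hn2
    _ ≤ 2 * ω := hkey
end

section
/- Let x = [a, a+1] be a closed unit interval and let y be a unit interval (open or closed) with y ∈ {[a-1, a], (a, a+1), [a+1, a+2]}. Then in any pairwise-disjoint family (row) of open/closed unit intervals containing three intervals that all intersect x, y intersects exactly one interval of that row. -/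
private lemma ioo_subset (r : ℝ) (s : Set ℝ)
    (hf : s = Set.Icc r (r + 1) ∨ s = Set.Ioo r (r + 1)) :
    Set.Ioo r (r + 1) ⊆ s := by
  rcases hf with rfl | rfl
  · exact Set.Ioo_subset_Icc_self
  · exact subset_rfl

private lemma sep_lemma (r r' : ℝ) (s t : Set ℝ)
    (hf : s = Set.Icc r (r + 1) ∨ s = Set.Ioo r (r + 1))
    (hg : t = Set.Icc r' (r' + 1) ∨ t = Set.Ioo r' (r' + 1))
    (hd : s ∩ t = ∅) : r + 1 ≤ r' ∨ r' + 1 ≤ r := by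
  by_contra h
  push_neg at h
  obtain ⟨h1, h2⟩ := h
  set m := (max r r' + min r r' + 1) / 2 with hm
  have h3 : max r r' < min r r' + 1 := by
    rcases le_total r r' with h | h
    · rw [max_eq_right h, min_eq_left h]; linarith
    · rw [max_eq_left h, min_eq_right h]; linarith
  have hms : m ∈ Set.Ioo r (r + 1) := by
    constructor
    · have := le_max_left r r'
      have := min_le_left r r'
      rw [hm]; linarith
    · have := le_max_left r r'
      have := min_le_left r r'
      rw [hm]; linarith
  have hmt : m ∈ Set.Ioo r' (r' + 1) := by
    constructor
    · have := le_max_right r r'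
      have := min_le_right r r'
      rw [hm]; linarith
    · have := le_max_right r r'
      have := min_le_right r r'
      rw [hm]; linarith
  have : m ∈ s ∩ t := ⟨ioo_subset r s hf hms, ioo_subset r' t hg hmt⟩
  rw [hd] at this
  exact this

private lemma bnd (a r : ℝ) (s : Set ℝ)
    (hf : s = Set.Icc r (r + 1) ∨ s = Set.Ioo r (r + 1))
    (hs : (s ∩ Set.Icc a (a + 1)).Nonempty) :
    a - 1 ≤ r ∧ r ≤ a + 1 := by
  obtain ⟨x, hx1, hx2⟩ := hs
  rw [Set.mem_Icc] at hx2
  rcases hf with rfl | rfl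
  · rw [Set.mem_Icc] at hx1
    constructor <;> linarith
  · rw [Set.mem_Ioo] at hx1
    constructor <;> linarith

private lemma left_id (a r : ℝ) (s : Set ℝ)
    (hf : s = Set.Icc r (r + 1) ∨ s = Set.Ioo r (r + 1))
    (hs : (s ∩ Set.Icc a (a + 1)).Nonempty) (hr : r = a - 1) :
    s = Set.Icc (a - 1) a := by
  subst hr
  rcases hf with rfl | rfl
  · rw [show a - 1 + 1 = a by ring]
  · obtain ⟨x, hx1, hx2⟩ := hs
    rw [Set.mem_Ioo] at hx1
    rw [Set.mem_Icc] at hx2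
    exfalso; linarith [hx1.2, hx2.1]

private lemma right_id (a r : ℝ) (s : Set ℝ)
    (hf : s = Set.Icc r (r + 1) ∨ s = Set.Ioo r (r + 1))
    (hs : (s ∩ Set.Icc a (a + 1)).Nonempty) (hr : r = a + 1) :
    s = Set.Icc (a + 1) (a + 2) := by
  subst hr
  rcases hf with rfl | rfl
  · rw [show a + 1 + 1 = a + 2 by ring]
  · obtain ⟨x, hx1, hx2⟩ := hs
    rw [Set.mem_Ioo] at hx1
    rw [Set.mem_Icc] at hx2
    exfalso; linarith [hx1.1, hx2.2]

private lemma mid_id (a r : ℝ) (s : Set ℝ)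
    (hf : s = Set.Icc r (r + 1) ∨ s = Set.Ioo r (r + 1))
    (ha : a ∉ s) (hr : r = a) : s = Set.Ioo a (a + 1) := by
  rcases hf with rfl | rfl
  · exact absurd (Set.mem_Icc.mpr ⟨by linarith, by linarith⟩) ha
  · rw [hr]

private lemma sorted_case_s13 (a : ℝ) (p q : Set ℝ) (rp rq : ℝ)
    (fp : p = Set.Icc rp (rp + 1) ∨ p = Set.Ioo rp (rp + 1))
    (fq : q = Set.Icc rq (rq + 1) ∨ q = Set.Ioo rq (rq + 1))
    (ip : (p ∩ Set.Icc a (a + 1)).Nonempty)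
    (dqp : q ∩ p = ∅)
    (hp : rp = a - 1) (hq : rq = a) :
    p = Set.Icc (a - 1) a ∧ q = Set.Ioo a (a + 1) := by
  have eL := left_id a rp p fp ip hp
  refine ⟨eL, mid_id a rq q fq ?_ hq⟩
  intro haq
  have hap : a ∈ p := by rw [eL]; exact ⟨by linarith, le_refl a⟩
  have : a ∈ q ∩ p := ⟨haq, hap⟩
  rw [dqp] at this
  exact this

/-- If a pairwise-disjoint row of open/closed unit intervals contains three
intervals all intersecting `[a, a+1]`, then each of `[a-1, a]`, `(a, a+1)`,
`[a+1, a+2]` intersects exactly one interval of that row. -/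
theorem stmt13 (a : ℝ) (y : Set ℝ)
    (hy : y ∈ ({Set.Icc (a - 1) a, Set.Ioo a (a + 1),
      Set.Icc (a + 1) (a + 2)} : Set (Set ℝ)))
    (F : Set (Set ℝ)) (hF : ∀ s ∈ F, IsUnitInterval s)
    (hdisj : F.Pairwise fun s t => s ∩ t = ∅)
    (s₁ s₂ s₃ : Set ℝ) (h₁ : s₁ ∈ F) (h₂ : s₂ ∈ F) (h₃ : s₃ ∈ F)
    (h12 : s₁ ≠ s₂) (h13 : s₁ ≠ s₃) (h23 : s₂ ≠ s₃)
    (hi₁ : (s₁ ∩ Set.Icc a (a + 1)).Nonempty)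
    (hi₂ : (s₂ ∩ Set.Icc a (a + 1)).Nonempty)
    (hi₃ : (s₃ ∩ Set.Icc a (a + 1)).Nonempty) :
    ∃ s ∈ F, (s ∩ y).Nonempty ∧ ∀ t ∈ F, (t ∩ y).Nonempty → t = s := by
  obtain ⟨r₁, f₁⟩ := hF s₁ h₁
  obtain ⟨r₂, f₂⟩ := hF s₂ h₂
  obtain ⟨r₃, f₃⟩ := hF s₃ h₃
  obtain ⟨b₁l, b₁r⟩ := bnd a r₁ s₁ f₁ hi₁
  obtain ⟨b₂l, b₂r⟩ := bnd a r₂ s₂ f₂ hi₂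
  obtain ⟨b₃l, b₃r⟩ := bnd a r₃ s₃ f₃ hi₃
  have d12 := hdisj h₁ h₂ h12
  have d21 := hdisj h₂ h₁ h12.symm
  have d13 := hdisj h₁ h₃ h13
  have d31 := hdisj h₃ h₁ h13.symm
  have d23 := hdisj h₂ h₃ h23
  have d32 := hdisj h₃ h₂ h23.symm
  have s12 := sep_lemma r₁ r₂ s₁ s₂ f₁ f₂ d12
  have s13 := sep_lemma r₁ r₃ s₁ s₃ f₁ f₃ d13
  have s23 := sep_lemma r₂ r₃ s₂ s₃ f₂ f₃ d23
  simp only [Set.mem_insert_iff, Set.mem_singleton_iff] at hy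
  have fin : ∀ s, s ∈ F → s = y →
      ∃ s ∈ F, (s ∩ y).Nonempty ∧ ∀ t ∈ F, (t ∩ y).Nonempty → t = s := by
    intro s hsF hsy
    refine ⟨s, hsF, ?_, ?_⟩
    · rw [hsy, Set.inter_self]
      rcases hy with rfl | rfl | rfl
      · exact Set.nonempty_Icc.mpr (by linarith)
      · exact Set.nonempty_Ioo.mpr (by linarith)
      · exact Set.nonempty_Icc.mpr (by linarith)
    · intro t htF hty
      by_contra hne
      have hd := hdisj htF hsF hne
      rw [hsy] at hd
      exact hty.ne_empty hd
  rcases s12 with c12 | c12 <;> rcases s13 with c13 | c13 <;>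
    rcases s23 with c23 | c23
  · obtain ⟨eL, eM⟩ := sorted_case_s13 a s₁ s₂ r₁ r₂ f₁ f₂ hi₁ d21
      (by linarith) (by linarith)
    have eR := right_id a r₃ s₃ f₃ hi₃ (by linarith)
    rcases hy with rfl | rfl | rfl
    exacts [fin s₁ h₁ eL, fin s₂ h₂ eM, fin s₃ h₃ eR]
  · obtain ⟨eL, eM⟩ := sorted_case_s13 a s₁ s₃ r₁ r₃ f₁ f₃ hi₁ d31
      (by linarith) (by linarith)
    have eR := right_id a r₂ s₂ f₂ hi₂ (by linarith)
    rcases hy with rfl | rfl | rfl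
    exacts [fin s₁ h₁ eL, fin s₃ h₃ eM, fin s₂ h₂ eR]
  · linarith
  · obtain ⟨eL, eM⟩ := sorted_case_s13 a s₃ s₁ r₃ r₁ f₃ f₁ hi₃ d13
      (by linarith) (by linarith)
    have eR := right_id a r₂ s₂ f₂ hi₂ (by linarith)
    rcases hy with rfl | rfl | rfl
    exacts [fin s₃ h₃ eL, fin s₁ h₁ eM, fin s₂ h₂ eR]
  · obtain ⟨eL, eM⟩ := sorted_case_s13 a s₂ s₁ r₂ r₁ f₂ f₁ hi₂ d12
      (by linarith) (by linarith)
    have eR := right_id a r₃ s₃ f₃ hi₃ (by linarith)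
    rcases hy with rfl | rfl | rfl
    exacts [fin s₂ h₂ eL, fin s₁ h₁ eM, fin s₃ h₃ eR]
  · linarith
  · obtain ⟨eL, eM⟩ := sorted_case_s13 a s₂ s₃ r₂ r₃ f₂ f₃ hi₂ d32
      (by linarith) (by linarith)
    have eR := right_id a r₁ s₁ f₁ hi₁ (by linarith)
    rcases hy with rfl | rfl | rfl
    exacts [fin s₂ h₂ eL, fin s₃ h₃ eM, fin s₁ h₁ eR]
  · obtain ⟨eL, eM⟩ := sorted_case_s13 a s₃ s₂ r₃ r₂ f₃ f₂ hi₃ d23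
      (by linarith) (by linarith)
    have eR := right_id a r₁ s₁ f₁ hi₁ (by linarith)
    rcases hy with rfl | rfl | rfl
    exacts [fin s₃ h₃ eL, fin s₂ h₂ eM, fin s₁ h₁ eR]
end

section
/- Fix a proper coloring of a set I of open/closed unit intervals into ω rows and let x ∈ I. If r_2(x) ≥ (2/3)ω, then the number of intervals other than x intersecting x is at most (7/3)ω - 3, and hence the FirstFit color of x is at most (7/3)ω - 2. -/
/-- Two unit intervals whose left endpoints are at distance `< 1` intersect. -/
lemma aux_unit_inter {r r' : ℝ} {s t : Set ℝ}
    (hs : s = Set.Icc r (r + 1) ∨ s = Set.Ioo r (r + 1))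
    (ht : t = Set.Icc r' (r' + 1) ∨ t = Set.Ioo r' (r' + 1))
    (h : |r - r'| < 1) : (s ∩ t).Nonempty := by
  rw [abs_sub_lt_iff] at h
  set m := (max r r' + min r r' + 1) / 2 with hm
  have h1 : r < m ∧ m < r + 1 ∧ r' < m ∧ m < r' + 1 := by
    rcases le_total r r' with h' | h' <;>
      simp only [hm, max_eq_right, max_eq_left, min_eq_left, min_eq_right, h'] <;>
      refine ⟨by linarith [h.1, h.2], by linarith [h.1, h.2], by linarith [h.1, h.2],
        by linarith [h.1, h.2]⟩
  refine ⟨m, ?_, ?_⟩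
  · rcases hs with hs | hs <;> rw [hs]
    · exact ⟨h1.1.le, h1.2.1.le⟩
    · exact ⟨h1.1, h1.2.1⟩
  · rcases ht with ht | ht <;> rw [ht]
    · exact ⟨h1.2.2.1.le, h1.2.2.2.le⟩
    · exact ⟨h1.2.2.1, h1.2.2.2⟩

lemma aux_mem_unit {r : ℝ} {s : Set ℝ} {u : ℝ}
    (hs : s = Set.Icc r (r + 1) ∨ s = Set.Ioo r (r + 1)) (hu : u ∈ s) :
    r ≤ u ∧ u ≤ r + 1 := by
  rcases hs with hs | hs <;> rw [hs] at hu
  · exact ⟨hu.1, hu.2⟩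
  · exact ⟨hu.1.le, hu.2.le⟩

/-- A family of pairwise disjoint unit intervals all meeting a fixed unit interval
has at most 3 members. -/
lemma aux_row_bound {ι : Type*} (f : ι → Set ℝ) (hunit : ∀ i, IsUnitInterval (f i))
    (x : ι) (S : Set ι)
    (hdisj : ∀ i ∈ S, ∀ j ∈ S, i ≠ j → ¬(f i ∩ f j).Nonempty)
    (hmeet : ∀ i ∈ S, (f i ∩ f x).Nonempty) :
    S.Finite ∧ S.ncard ≤ 3 := by
  classical
  set L : ι → ℝ := fun i => (hunit i).choose with hL
  have hLspec : ∀ i, f i = Set.Icc (L i) (L i + 1) ∨ f i = Set.Ioo (L i) (L i + 1) :=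
    fun i => (hunit i).choose_spec
  set a := L x with ha
  set g : ι → ℤ := fun i => ⌈L i - (a - 1)⌉ with hg
  -- endpoints of members of S lie in [a-1, a+1]
  have hrange : ∀ i ∈ S, a - 1 ≤ L i ∧ L i ≤ a + 1 := by
    intro i hi
    obtain ⟨u, hui, hux⟩ := hmeet i hi
    have h1 := aux_mem_unit (hLspec i) hui
    have h2 := aux_mem_unit (hLspec x) hux
    constructor <;> linarith [h1.1, h1.2, h2.1, h2.2]
  have hinj : Set.InjOn g S := by
    intro i hi j hj hij
    by_contra hne
    apply hdisj i hi j hj hne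
    apply aux_unit_inter (hLspec i) (hLspec j)
    have h1 : (L i - (a - 1)) ≤ (g i : ℝ) := Int.le_ceil _
    have h2 : ((g i : ℤ) : ℝ) < (L i - (a - 1)) + 1 := Int.ceil_lt_add_one _
    have h3 : (L j - (a - 1)) ≤ (g j : ℝ) := Int.le_ceil _
    have h4 : ((g j : ℤ) : ℝ) < (L j - (a - 1)) + 1 := Int.ceil_lt_add_one _
    have hgg : ((g i : ℤ) : ℝ) = ((g j : ℤ) : ℝ) := by rw [hij]
    rw [abs_sub_lt_iff]
    constructor <;> linarith
  have hsub : g '' S ⊆ ↑(Finset.Icc (0 : ℤ) 2) := by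
    rintro _ ⟨i, hi, rfl⟩
    have h := hrange i hi
    simp only [Finset.coe_Icc, Set.mem_Icc]
    constructor
    · exact Int.ceil_nonneg (by linarith [h.1])
    · exact Int.ceil_le.mpr (by push_cast; linarith [h.2])
  have himfin : (g '' S).Finite :=
    Set.Finite.subset (Finset.Icc (0 : ℤ) 2).finite_toSet hsub
  have hSfin : S.Finite := Set.Finite.of_finite_image himfin hinj
  refine ⟨hSfin, ?_⟩
  calc S.ncard = (g '' S).ncard := (Set.ncard_image_of_injOn hinj).symm
    _ ≤ (↑(Finset.Icc (0 : ℤ) 2) : Set ℤ).ncard :=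
        Set.ncard_le_ncard hsub (Finset.Icc (0 : ℤ) 2).finite_toSet
    _ = 3 := by rw [Set.ncard_coe_finset]; decide

/-- If `r₂(x) ≥ (2/3)ω` then `x` intersects at most `(7/3)ω - 3` other
intervals, and hence the FirstFit color of `x` is at most `(7/3)ω - 2`. -/
theorem stmt16 {ι : Type*} (f : ι → Set ℝ)
    (hunit : ∀ i, IsUnitInterval (f i)) (ω : ℕ) (C : ι → Fin ω)
    (hC : ∀ i j, i ≠ j → (f i ∩ f j).Nonempty → C i ≠ C j)
    (ord : ι → ℕ) (hord : Function.Injective ord) (c : ι → ℕ)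
    (hc : ∀ i, c i = sInf {n : ℕ | 1 ≤ n ∧
      ∀ j, j ≠ i → (f i ∩ f j).Nonempty → ord j < ord i → c j ≠ n})
    (x : ι) (hr : (2 : ℚ) / 3 * ω ≤ (nbRows f C x 2 : ℚ)) :
    {j | j ≠ x ∧ (f j ∩ f x).Nonempty}.Finite ∧
    (({j | j ≠ x ∧ (f j ∩ f x).Nonempty}.ncard : ℚ) ≤ 7 / 3 * ω - 3) ∧
    ((c x : ℚ) ≤ 7 / 3 * ω - 2) := by
  classical
  set T : Set ι := {j | j ≠ x ∧ (f j ∩ f x).Nonempty} with hT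
  set S : Fin ω → Set ι := fun ρ => {j | j ≠ x ∧ C j = ρ ∧ (f j ∩ f x).Nonempty} with hS
  have hrow : ∀ ρ, (S ρ).Finite ∧ (S ρ).ncard ≤ 3 := by
    intro ρ
    apply aux_row_bound f hunit x
    · rintro i ⟨hix, hiρ, -⟩ j ⟨hjx, hjρ, -⟩ hij hmeet
      exact hC i j hij hmeet (hiρ.trans hjρ.symm)
    · exact fun i hi => hi.2.2
  set F : Fin ω → Finset ι := fun ρ => (hrow ρ).1.toFinset with hF
  have hFmem : ∀ ρ j, j ∈ F ρ ↔ (j ≠ x ∧ C j = ρ ∧ (f j ∩ f x).Nonempty) := by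
    intro ρ j; simp [hF, hS, Set.Finite.mem_toFinset]
  have hTfin : T.Finite := by
    have : T ⊆ ⋃ ρ, S ρ := by
      rintro j ⟨hjx, hjm⟩
      exact Set.mem_iUnion.mpr ⟨C j, hjx, rfl, hjm⟩
    exact Set.Finite.subset (Set.finite_iUnion fun ρ => (hrow ρ).1) this
  have hTeq : hTfin.toFinset = Finset.univ.biUnion F := by
    ext j
    simp only [Set.Finite.mem_toFinset, Finset.mem_biUnion, Finset.mem_univ, true_and, hFmem]
    constructor
    · rintro ⟨hjx, hjm⟩; exact ⟨C j, hjx, rfl, hjm⟩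
    · rintro ⟨ρ, hjx, -, hjm⟩; exact ⟨hjx, hjm⟩
  set m : Fin ω → ℕ := fun ρ => (F ρ).card with hm
  have hm3 : ∀ ρ, m ρ ≤ 3 := by
    intro ρ
    have := (hrow ρ).2
    rwa [Set.ncard_eq_toFinset_card _ (hrow ρ).1] at this
  have hmx : m (C x) = 0 := by
    rw [Finset.card_eq_zero]
    ext j
    simp only [hFmem, Finset.notMem_empty, iff_false]
    rintro ⟨hjx, hjc, hjm⟩
    exact hC j x hjx hjm hjc
  -- total count
  set N := T.ncard with hN
  have hdisjF : ∀ ρ₁ ∈ (Finset.univ : Finset (Fin ω)), ∀ ρ₂ ∈ (Finset.univ : Finset (Fin ω)),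
      ρ₁ ≠ ρ₂ → Disjoint (F ρ₁) (F ρ₂) := by
    intro ρ₁ _ ρ₂ _ hne
    rw [Finset.disjoint_left]
    intro j hj1 hj2
    rw [hFmem] at hj1
    rw [hFmem] at hj2
    exact hne (hj1.2.1.symm.trans hj2.2.1)
  have hNsum : N = ∑ ρ, m ρ := by
    rw [hN, Set.ncard_eq_toFinset_card _ hTfin, hTeq, Finset.card_biUnion hdisjF]
  -- identify nbRows with a filter card
  have hr2 : nbRows f C x 2 = (Finset.univ.filter (fun ρ => m ρ = 2)).card := by
    rw [nbRows]
    have : {ρ : Fin ω | ({j | j ≠ x ∧ C j = ρ ∧ (f j ∩ f x).Nonempty}).ncard = 2} =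
        ↑(Finset.univ.filter (fun ρ => m ρ = 2)) := by
      ext ρ
      simp only [Set.mem_setOf_eq, Finset.coe_filter, Finset.mem_univ, true_and]
      rw [Set.ncard_eq_toFinset_card _ (hrow ρ).1]
    rw [this, Set.ncard_coe_finset]
  set r2 := (Finset.univ.filter (fun ρ => m ρ = 2)).card with hr2'
  -- key inequality: ∑ m + r2 + 3 ≤ 3ω
  have hkey : (∑ ρ, m ρ) + (r2 + 3) ≤ 3 * ω := by
    set w : Fin ω → ℕ := fun ρ => (if m ρ = 2 then 1 else 0) + (if ρ = C x then 3 else 0)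
      with hw
    have h1 : r2 + 3 ≤ ∑ ρ, w ρ := by
      rw [hw, Finset.sum_add_distrib]
      have e1 : ∑ ρ, (if m ρ = 2 then (1:ℕ) else 0) = r2 := by
        rw [hr2', Finset.card_filter]
      have e2 : ∑ ρ : Fin ω, (if ρ = C x then (3:ℕ) else 0) = 3 := by
        rw [Finset.sum_ite_eq' Finset.univ (C x) (fun _ => (3:ℕ))]
        simp
      rw [e1, e2]
    have h2 : ∀ ρ : Fin ω, m ρ + w ρ ≤ 3 := by
      intro ρ
      rw [hw]
      by_cases hρ : ρ = C x
      · subst hρ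
        simp [hmx]
      · simp only [if_neg hρ, add_zero]
        by_cases h2' : m ρ = 2
        · simp [h2']
        · simpa [h2'] using hm3 ρ
    calc (∑ ρ, m ρ) + (r2 + 3) ≤ (∑ ρ, m ρ) + ∑ ρ, w ρ := by omega
      _ = ∑ ρ, (m ρ + w ρ) := (Finset.sum_add_distrib).symm
      _ ≤ ∑ _ρ : Fin ω, 3 := Finset.sum_le_sum fun ρ _ => h2 ρ
      _ = 3 * ω := by simp [Finset.sum_const, Finset.card_univ, Nat.mul_comm]
  have hNQ : (N : ℚ) ≤ 7 / 3 * ω - 3 := by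
    have h3 : ((∑ ρ, m ρ : ℕ) : ℚ) + (r2 + 3) ≤ 3 * ω := by exact_mod_cast hkey
    rw [hr2, hr2'] at hr
    rw [show (N : ℚ) = ((∑ ρ, m ρ : ℕ) : ℚ) from by rw [hNsum]]
    linarith
  refine ⟨hTfin, hNQ, ?_⟩
  -- FirstFit bound
  set P : Set ι := {j | j ≠ x ∧ (f x ∩ f j).Nonempty ∧ ord j < ord x} with hP
  have hPT : P ⊆ T := by
    rintro j ⟨hjx, hjm, -⟩
    exact ⟨hjx, Set.inter_comm (f x) (f j) ▸ hjm⟩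
  have hPfin : P.Finite := hTfin.subset hPT
  have hVlt : (c '' P).ncard < (↑(Finset.Icc 1 (N + 1)) : Set ℕ).ncard := by
    rw [Set.ncard_coe_finset, Nat.card_Icc]
    calc (c '' P).ncard ≤ P.ncard := Set.ncard_image_le hPfin
      _ ≤ N := Set.ncard_le_ncard hPT hTfin
      _ < N + 1 + 1 - 1 := by omega
  obtain ⟨n, hnt, hnV⟩ := Set.exists_mem_notMem_of_ncard_lt_ncard hVlt
    (hPfin.image c)
  rw [Finset.mem_coe, Finset.mem_Icc] at hnt
  have hmem : n ∈ {n : ℕ | 1 ≤ n ∧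
      ∀ j, j ≠ x → (f x ∩ f j).Nonempty → ord j < ord x → c j ≠ n} := by
    refine ⟨hnt.1, fun j hjx hjm hjo hcj => ?_⟩
    exact hnV ⟨j, ⟨hjx, hjm, hjo⟩, hcj⟩
  have hcx : c x ≤ N + 1 := le_trans (by rw [hc x]; exact Nat.sInf_le hmem) hnt.2
  have : (c x : ℚ) ≤ (N : ℚ) + 1 := by exact_mod_cast hcx
  linarith
end

section
/- Suppose two unit intervals y and z (each open or closed) intersect, and z is closed. If three pairwise-disjoint open/closed unit intervals all intersect z, then at least one of them intersects y. -/
lemma stmt19_key (a0 a1 a2 b : ℝ)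
    (h0l : b - 1 ≤ a0) (h0r : a0 ≤ b + 1)
    (h1l : b - 1 ≤ a1) (h1r : a1 ≤ b + 1)
    (h2l : b - 1 ≤ a2) (h2r : a2 ≤ b + 1)
    (d01 : 1 ≤ a0 - a1 ∨ 1 ≤ a1 - a0)
    (d02 : 1 ≤ a0 - a2 ∨ 1 ≤ a2 - a0)
    (d12 : 1 ≤ a1 - a2 ∨ 1 ≤ a2 - a1) :
    (a0 = b - 1 ∨ a1 = b - 1 ∨ a2 = b - 1) ∧
    (a0 = b ∨ a1 = b ∨ a2 = b) ∧
    (a0 = b + 1 ∨ a1 = b + 1 ∨ a2 = b + 1) := by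
  rcases d01 with d01 | d01 <;> rcases d02 with d02 | d02 <;>
    rcases d12 with d12 | d12 <;>
    refine ⟨?_, ?_, ?_⟩ <;>
    first
      | (left; linarith)
      | (right; left; linarith)
      | (right; right; linarith)

/-- If unit intervals `y` and `z` intersect with `z` closed, then of any three
pairwise-disjoint open/closed unit intervals all meeting `z`, at least one
meets `y`. -/
theorem stmt19 (b : ℝ) (y z : Set ℝ) (hy : IsUnitInterval y)
    (hz : z = Set.Icc b (b + 1)) (hyz : (y ∩ z).Nonempty)
    (s : Fin 3 → Set ℝ) (hunit : ∀ i, IsUnitInterval (s i))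
    (hdisj : ∀ i j, i ≠ j → s i ∩ s j = ∅)
    (hint : ∀ i, (s i ∩ z).Nonempty) :
    ∃ i, (s i ∩ y).Nonempty := by
  choose r hr using hunit
  -- bounds on r i
  have hbnd : ∀ i, b - 1 ≤ r i ∧ r i ≤ b + 1 := by
    intro i
    obtain ⟨p, hps, hpz⟩ := hint i
    rw [hz] at hpz
    obtain ⟨hpb, hpb1⟩ := hpz
    rcases hr i with h | h <;> rw [h] at hps <;>
      obtain ⟨h1, h2⟩ := hps <;> constructor <;> linarith
  -- separation
  have hsep : ∀ i j, i ≠ j → 1 ≤ r i - r j ∨ 1 ≤ r j - r i := by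
    intro i j hij
    by_contra hcon
    push_neg at hcon
    obtain ⟨c1, c2⟩ := hcon
    set t := (max (r i) (r j) + min (r i) (r j) + 1) / 2 with ht
    have hmi : r i ≤ max (r i) (r j) := le_max_left _ _
    have hmj : r j ≤ max (r i) (r j) := le_max_right _ _
    have hni : min (r i) (r j) ≤ r i := min_le_left _ _
    have hnj : min (r i) (r j) ≤ r j := min_le_right _ _
    have hlt : max (r i) (r j) - min (r i) (r j) < 1 := by
      rcases le_total (r i) (r j) with h | h
      · rw [max_eq_right h, min_eq_left h]; linarith
      · rw [max_eq_left h, min_eq_right h]; linarith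
    have hti : t ∈ s i := by
      rcases hr i with h | h <;> rw [h] <;> constructor <;> linarith
    have htj : t ∈ s j := by
      rcases hr j with h | h <;> rw [h] <;> constructor <;> linarith
    have : t ∈ s i ∩ s j := ⟨hti, htj⟩
    rw [hdisj i j hij] at this
    exact this
  have key := stmt19_key (r 0) (r 1) (r 2) b
    (hbnd 0).1 (hbnd 0).2 (hbnd 1).1 (hbnd 1).2 (hbnd 2).1 (hbnd 2).2
    (hsep 0 1 (by decide)) (hsep 0 2 (by decide)) (hsep 1 2 (by decide))
  obtain ⟨hL, hM, hR⟩ := key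
  obtain ⟨x, hxy, hxz⟩ := hyz
  rw [hz] at hxz
  obtain ⟨hxb, hxb1⟩ := hxz
  -- closed-at-endpoint lemma
  have hclosed : ∀ i, (r i = b - 1 ∨ r i = b + 1) → s i = Set.Icc (r i) (r i + 1) := by
    intro i hi
    rcases hr i with h | h
    · exact h
    · exfalso
      obtain ⟨p, hps, hpz⟩ := hint i
      rw [hz] at hpz
      rw [h] at hps
      obtain ⟨h1, h2⟩ := hps
      obtain ⟨h3, h4⟩ := hpz
      rcases hi with hi | hi <;> rw [hi] at h1 h2 <;> linarith
  rcases eq_or_lt_of_le hxb with heq | hxb'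
  · -- x = b, use interval starting at b-1
    have : ∃ i, r i = b - 1 := by
      rcases hL with h | h | h
      exacts [⟨0, h⟩, ⟨1, h⟩, ⟨2, h⟩]
    obtain ⟨i, hi⟩ := this
    refine ⟨i, x, ?_, hxy⟩
    rw [hclosed i (Or.inl hi), hi]
    constructor <;> linarith
  · rcases eq_or_lt_of_le hxb1 with heq | hxb1'
    · -- x = b + 1, use interval starting at b+1
      have : ∃ i, r i = b + 1 := by
        rcases hR with h | h | h
        exacts [⟨0, h⟩, ⟨1, h⟩, ⟨2, h⟩]
      obtain ⟨i, hi⟩ := this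
      refine ⟨i, x, ?_, hxy⟩
      rw [hclosed i (Or.inr hi), hi]
      constructor <;> linarith
    · -- b < x < b + 1, use interval starting at b
      have : ∃ i, r i = b := by
        rcases hM with h | h | h
        exacts [⟨0, h⟩, ⟨1, h⟩, ⟨2, h⟩]
      obtain ⟨i, hi⟩ := this
      refine ⟨i, x, ?_, hxy⟩
      rcases hr i with h | h <;> rw [h, hi] <;> constructor <;> linarith
end
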